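/- arXiv:1904.13225 — 7 statements merged into one kernel-verified Lean document; each statement's English description precedes it below -/
import Mathlib

section
/- For any simple graph G on n ≥ 3 vertices, q_2(G) + q_2(\overline{G}) ≥ n - 2, where q_2 denotes the second largest eigenvalue of the signless Laplacian matrix. -/
open Matrix

/-- The signless Laplacian matrix `Q(G) = D(G) + A(G)` of a simple graph. -/
noncomputable def signlessLaplacian {V : Type*} [Fintype V] [DecidableEq V]
    (G : SimpleGraph V) : Matrix V V ℝ :=
  letI := Classical.decRel G.Adj
  Matrix.diagonal (fun v => (G.degree v : ℝ)) + G.adjMatrix ℝ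

/-- The multiset of eigenvalues (with multiplicity) of a real symmetric matrix. -/
noncomputable def eigMultiset {V : Type*} [Fintype V] [DecidableEq V]
    (A : Matrix V V ℝ) : Multiset ℝ :=
  if h : A.IsHermitian then Finset.univ.val.map h.eigenvalues else 0

/-- The `k`-th largest eigenvalue (1-indexed) of a real symmetric matrix. -/
noncomputable def kthEig {V : Type*} [Fintype V] [DecidableEq V]
    (A : Matrix V V ℝ) (k : ℕ) : ℝ :=
  ((eigMultiset A).sort (· ≥ ·)).getD (k - 1) 0

/-- Degree of a vertex, with classical decidability of adjacency. -/
noncomputable def gdeg {V : Type*} [Fintype V] (G : SimpleGraph V) (v : V) : ℕ :=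
  letI := Classical.decRel G.Adj
  G.degree v

/-- The `k`-th largest degree (1-indexed, with multiplicity) of a graph. -/
noncomputable def kthLargestDegree {V : Type*} [Fintype V] (G : SimpleGraph V) (k : ℕ) : ℕ :=
  ((Finset.univ.val.map (gdeg G)).sort (· ≥ ·)).getD (k - 1) 0

/- ## Auxiliary lemmas -/

lemma aux_conj {n : ℕ} (U M : Matrix (Fin n) (Fin n) ℝ) (x : Fin n → ℝ) :
    x ⬝ᵥ ((U * M * Uᴴ) *ᵥ x) = (Uᴴ *ᵥ x) ⬝ᵥ (M *ᵥ (Uᴴ *ᵥ x)) := by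
  rw [← mulVec_mulVec, ← mulVec_mulVec, dotProduct_mulVec x U]
  congr 1
  rw [conjTranspose_eq_transpose_of_trivial, mulVec_transpose]

lemma aux_herm {n : ℕ} (G : SimpleGraph (Fin n)) : (signlessLaplacian G).IsHermitian := by
  classical
  unfold signlessLaplacian
  refine (isHermitian_diagonal _).add ?_
  rw [Matrix.IsHermitian, conjTranspose_eq_transpose_of_trivial]
  exact SimpleGraph.isSymm_adjMatrix G

/-- Second-largest selector: there is an index whose removal bounds all other values
by the second element of the sorted list. -/
lemma aux_second {α : Type*} [Fintype α] [DecidableEq α] [Nonempty α] (f : α → ℝ) :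
    ∃ i₀ : α, ∀ i ≠ i₀,
      f i ≤ ((Finset.univ.val.map f).sort (· ≥ ·)).getD 1 0 := by
  set M : Multiset ℝ := Finset.univ.val.map f with hM
  set l : List ℝ := M.sort (· ≥ ·) with hl
  have hlM : (l : Multiset ℝ) = M := Multiset.sort_eq _ _
  have hlen : l.length = Fintype.card α := by
    rw [hl, Multiset.length_sort, hM, Multiset.card_map]
    simp [Finset.card_univ]
  have hne : l ≠ [] := by
    intro h
    have := Fintype.card_pos (α := α)
    rw [← hlen, h] at this; simp at this
  obtain ⟨a, t, hat⟩ := List.exists_cons_of_ne_nil hne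
  have haM : a ∈ M := by
    rw [← hlM, hat]; exact List.mem_cons_self
  obtain ⟨i₀, -, hi₀⟩ := Multiset.mem_map.mp haM
  refine ⟨i₀, fun i hi => ?_⟩
  -- f i belongs to the multiset with one copy of a removed, i.e. to t
  have hiu : i ∈ (Finset.univ.val.erase i₀) :=
    (Multiset.mem_erase_of_ne hi).mpr (Finset.mem_univ_val i)
  have hcons : (Finset.univ.val : Multiset α) = i₀ ::ₘ Finset.univ.val.erase i₀ :=
    (Multiset.cons_erase (Finset.mem_univ_val i₀)).symm
  have hMe : M.erase a = (Finset.univ.val.erase i₀).map f := by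
    conv_lhs => rw [hM, hcons]
    rw [Multiset.map_cons, hi₀, Multiset.erase_cons_head]
  have hfit : f i ∈ t := by
    have : f i ∈ M.erase a := by
      rw [hMe]; exact Multiset.mem_map_of_mem f hiu
    rw [← hlM, hat] at this
    simpa using this
  obtain ⟨b, t', hbt⟩ := List.exists_cons_of_ne_nil
    (show t ≠ [] from fun h => by rw [h] at hfit; simp at hfit)
  have hsorted : List.Pairwise (· ≥ ·) l := Multiset.pairwise_sort _ _
  rw [hat, hbt] at hsorted
  rw [hat, hbt]
  have : f i ≤ b := by
    rw [hbt] at hfit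
    rcases List.mem_cons.mp hfit with h | h
    · exact le_of_eq h
    · exact List.rel_of_pairwise_cons hsorted.of_cons h
  simpa using this

/-- The key quadratic form bound. -/
lemma aux_quad {n : ℕ} {A : Matrix (Fin n) (Fin n) ℝ} (hA : A.IsHermitian)
    (i₀ : Fin n) (c : ℝ) (hc : ∀ i ≠ i₀, hA.eigenvalues i ≤ c)
    (x : Fin n → ℝ)
    (hx : (((hA.eigenvectorUnitary : Matrix (Fin n) (Fin n) ℝ))ᴴ *ᵥ x) i₀ = 0) :
    x ⬝ᵥ (A *ᵥ x) ≤ c * (x ⬝ᵥ x) := by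
  set U : Matrix (Fin n) (Fin n) ℝ := (hA.eigenvectorUnitary : Matrix (Fin n) (Fin n) ℝ) with hU
  set y : Fin n → ℝ := Uᴴ *ᵥ x with hy
  have hUU : U * Uᴴ = 1 := by
    rw [← Matrix.star_eq_conjTranspose]
    exact (Matrix.mem_unitaryGroup_iff).mp hA.eigenvectorUnitary.2
  have hxx : x ⬝ᵥ x = y ⬝ᵥ y := by
    have := aux_conj U 1 x
    rw [Matrix.mul_one, hUU] at this
    simp only [Matrix.one_mulVec] at this
    exact this
  have hAx : x ⬝ᵥ (A *ᵥ x) = y ⬝ᵥ (Matrix.diagonal hA.eigenvalues *ᵥ y) := by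
    have hst : A = U * Matrix.diagonal hA.eigenvalues * Uᴴ := by
      have h := hA.spectral_theorem
      rw [Unitary.conjStarAlgAut_apply, Matrix.star_eq_conjTranspose] at h
      rw [show (RCLike.ofReal ∘ hA.eigenvalues : Fin n → ℝ) = hA.eigenvalues by
        funext i; simp [Function.comp, RCLike.ofReal_real_eq_id]] at h
      exact h
    conv_lhs => rw [hst]
    exact aux_conj U _ x
  rw [hAx, hxx]
  have hyd : y ⬝ᵥ (Matrix.diagonal hA.eigenvalues *ᵥ y) =
      ∑ i, hA.eigenvalues i * (y i * y i) := by
    simp only [dotProduct, Matrix.mulVec_diagonal]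
    exact Finset.sum_congr rfl (fun i _ => by ring)
  have hyy : y ⬝ᵥ y = ∑ i, y i * y i := rfl
  rw [hyd, hyy, Finset.mul_sum]
  apply Finset.sum_le_sum
  intro i _
  rcases eq_or_ne i i₀ with rfl | h
  · rw [hx]; simp
  · exact mul_le_mul_of_nonneg_right (hc i h) (mul_self_nonneg _)

/-- Sum of the two signless Laplacians. -/
lemma aux_sum {n : ℕ} (hn : 1 ≤ n) (G : SimpleGraph (Fin n)) :
    signlessLaplacian G + signlessLaplacian Gᶜ =
      ((n : ℝ) - 2) • (1 : Matrix (Fin n) (Fin n) ℝ) + Matrix.of (fun _ _ => (1 : ℝ)) := by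
  letI := Classical.decRel G.Adj
  letI := Classical.decRel Gᶜ.Adj
  unfold signlessLaplacian
  ext i j
  simp only [Matrix.add_apply, Matrix.diagonal_apply, Matrix.smul_apply, Matrix.one_apply,
    Matrix.of_apply, SimpleGraph.adjMatrix_apply]
  rcases eq_or_ne i j with rfl | h
  · have hdeg : Gᶜ.degree i = n - 1 - G.degree i := by
      have := SimpleGraph.degree_compl (G := G) (v := i)
      simpa using this
    have hle : G.degree i ≤ n - 1 := by
      have := SimpleGraph.degree_lt_card_verts (G := G) i
      simp only [Fintype.card_fin] at this
      omega
    simp only [if_pos rfl, G.irrefl, Gᶜ.irrefl, if_neg (by simp : ¬False)]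
    have : (G.degree i : ℝ) + (Gᶜ.degree i : ℝ) = (n : ℝ) - 1 := by
      rw [hdeg]
      have h1 : (((n - 1 - G.degree i : ℕ)) : ℝ) = (n : ℝ) - 1 - (G.degree i : ℝ) := by
        push_cast [Nat.cast_sub (by omega : 1 ≤ n), Nat.cast_sub hle]
        ring
      rw [h1]; ring
    rw [smul_eq_mul]
    push_cast at this ⊢
    linarith
  · have hadj : Gᶜ.Adj i j ↔ ¬ G.Adj i j := by
      constructor
      · intro hc; exact hc.2
      · intro hg; exact ⟨h, hg⟩
    simp only [if_neg h]
    by_cases hG : G.Adj i j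
    · rw [if_pos hG, if_neg (by rw [hadj]; exact not_not_intro hG)]
      norm_num
    · rw [if_neg hG, if_pos (hadj.mpr hG)]
      norm_num

lemma aux_kthEig {n : ℕ} {A : Matrix (Fin n) (Fin n) ℝ} (hA : A.IsHermitian) :
    kthEig A 2 = ((Finset.univ.val.map hA.eigenvalues).sort (· ≥ ·)).getD 1 0 := by
  unfold kthEig eigMultiset
  rw [dif_pos hA]

theorem stmt2 (n : ℕ) (hn : 3 ≤ n) (G : SimpleGraph (Fin n)) :
    (n : ℝ) - 2 ≤ kthEig (signlessLaplacian G) 2 + kthEig (signlessLaplacian Gᶜ) 2 := by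
  classical
  set A := signlessLaplacian G with hAdef
  set B := signlessLaplacian Gᶜ with hBdef
  have hA : A.IsHermitian := aux_herm G
  have hB : B.IsHermitian := aux_herm Gᶜ
  haveI : Nonempty (Fin n) := ⟨⟨0, by omega⟩⟩
  obtain ⟨iA, hiA⟩ := aux_second (α := Fin n) hA.eigenvalues
  obtain ⟨iB, hiB⟩ := aux_second (α := Fin n) hB.eigenvalues
  set UA : Matrix (Fin n) (Fin n) ℝ := (hA.eigenvectorUnitary : Matrix (Fin n) (Fin n) ℝ)
  set UB : Matrix (Fin n) (Fin n) ℝ := (hB.eigenvectorUnitary : Matrix (Fin n) (Fin n) ℝ)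
  -- two linear functionals
  let fA : (Fin n → ℝ) →ₗ[ℝ] ℝ :=
    { toFun := fun x => (UAᴴ) iA ⬝ᵥ x
      map_add' := fun a b => dotProduct_add _ a b
      map_smul' := fun r a => by simp [dotProduct_smul] }
  let fB : (Fin n → ℝ) →ₗ[ℝ] ℝ :=
    { toFun := fun x => (UBᴴ) iB ⬝ᵥ x
      map_add' := fun a b => dotProduct_add _ a b
      map_smul' := fun r a => by simp [dotProduct_smul] }
  let F := fA.prod fB
  have hker : ∃ x : Fin n → ℝ, x ≠ 0 ∧ fA x = 0 ∧ fB x = 0 := by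
    have hrank := LinearMap.finrank_range_add_finrank_ker F
    have hrange : Module.finrank ℝ (LinearMap.range F) ≤ 2 := by
      have := Submodule.finrank_le (LinearMap.range F)
      simpa [Module.finrank_prod] using this
    have hdim : Module.finrank ℝ (Fin n → ℝ) = n := by simp
    rw [hdim] at hrank
    have hkerpos : LinearMap.ker F ≠ ⊥ := by
      intro hbot
      rw [hbot, finrank_bot] at hrank
      omega
    obtain ⟨x, hxmem, hxne⟩ := Submodule.exists_mem_ne_zero_of_ne_bot hkerpos
    have := LinearMap.mem_ker.mp hxmem
    rw [LinearMap.prod_apply] at this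
    exact ⟨x, hxne, congrArg Prod.fst this, congrArg Prod.snd this⟩
  obtain ⟨x, hx0, hfA, hfB⟩ := hker
  have hxA : (UAᴴ *ᵥ x) iA = 0 := hfA
  have hxB : (UBᴴ *ᵥ x) iB = 0 := hfB
  have hQA : x ⬝ᵥ (A *ᵥ x) ≤ kthEig A 2 * (x ⬝ᵥ x) := by
    rw [aux_kthEig hA]
    exact aux_quad hA iA _ hiA x hxA
  have hQB : x ⬝ᵥ (B *ᵥ x) ≤ kthEig B 2 * (x ⬝ᵥ x) := by
    rw [aux_kthEig hB]
    exact aux_quad hB iB _ hiB x hxB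
  have hsum : ((n : ℝ) - 2) * (x ⬝ᵥ x) ≤ x ⬝ᵥ ((A + B) *ᵥ x) := by
    rw [aux_sum (by omega) G]
    rw [Matrix.add_mulVec, dotProduct_add, Matrix.smul_mulVec, Matrix.one_mulVec,
      dotProduct_smul]
    have hJ : x ⬝ᵥ ((Matrix.of (fun _ _ => (1:ℝ))) *ᵥ x) = (∑ i, x i) * (∑ i, x i) := by
      simp [dotProduct, Matrix.mulVec, Finset.sum_mul]
    rw [hJ]
    have : 0 ≤ (∑ i, x i) * (∑ i, x i) := mul_self_nonneg _
    simp only [smul_eq_mul]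
    linarith
  have hx2 : 0 < x ⬝ᵥ x := by
    have hnn : 0 ≤ x ⬝ᵥ x := Finset.sum_nonneg (fun i _ => mul_self_nonneg (x i))
    rcases lt_or_eq_of_le hnn with h | h
    · exact h
    · exact absurd (dotProduct_self_eq_zero.mp h.symm) hx0
  have hchain : ((n : ℝ) - 2) * (x ⬝ᵥ x) ≤ (kthEig A 2 + kthEig B 2) * (x ⬝ᵥ x) := by
    rw [Matrix.add_mulVec, dotProduct_add] at hsum
    nlinarith
  exact le_of_mul_le_mul_right (by linarith [hchain]) hx2
end

section
/- For any simple graph G on n ≥ 2 vertices, q_2(G) + q_n(\overline{G}) ≤ n - 2, where q_2 is the second largest and q_n the smallest eigenvalue of the signless Laplacian. -/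
open Matrix

section Aux

variable {V : Type*} [Fintype V] [DecidableEq V]

private lemma key (A : Matrix V V ℝ) (hA : A.IsHermitian) (y : V → ℝ) :
    ((hA.eigenvectorUnitary : Matrix V V ℝ) *ᵥ y) ⬝ᵥ
        (A *ᵥ ((hA.eigenvectorUnitary : Matrix V V ℝ) *ᵥ y))
      = ∑ i, hA.eigenvalues i * y i ^ 2 := by
  set U : Matrix V V ℝ := (hA.eigenvectorUnitary : Matrix V V ℝ) with hU
  have h1 : star U * U = 1 := Unitary.coe_star_mul_self hA.eigenvectorUnitary
  have hst : star U = Uᵀ := by ext i j; simp [Matrix.star_apply]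
  conv_lhs => rw [hA.spectral_theorem, Unitary.conjStarAlgAut_apply]
  rw [← hU, mulVec_mulVec, mul_assoc (U * _), h1, mul_one, ← mulVec_mulVec,
    dotProduct_mulVec, ← mulVec_transpose, ← hst, mulVec_mulVec, h1, one_mulVec]
  simp [dotProduct, Matrix.mulVec_diagonal, mul_comm, pow_two, mul_assoc]

private lemma key2 (A : Matrix V V ℝ) (hA : A.IsHermitian) (y : V → ℝ) :
    ((hA.eigenvectorUnitary : Matrix V V ℝ) *ᵥ y) ⬝ᵥ
        ((hA.eigenvectorUnitary : Matrix V V ℝ) *ᵥ y) = y ⬝ᵥ y := by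
  set U : Matrix V V ℝ := (hA.eigenvectorUnitary : Matrix V V ℝ) with hU
  have h1 : star U * U = 1 := Unitary.coe_star_mul_self hA.eigenvectorUnitary
  have hst : star U = Uᵀ := by ext i j; simp [Matrix.star_apply]
  rw [dotProduct_mulVec, ← mulVec_transpose, ← hst, mulVec_mulVec, h1, one_mulVec]

private lemma eigMultiset_eq (A : Matrix V V ℝ) (hA : A.IsHermitian) :
    eigMultiset A = Finset.univ.val.map hA.eigenvalues := dif_pos hA

private lemma kthEig_min (A : Matrix V V ℝ) (hA : A.IsHermitian) (i : V) :
    kthEig A (Fintype.card V) ≤ hA.eigenvalues i := by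
  set L := (eigMultiset A).sort (· ≥ ·) with hL
  have hlen : L.length = Fintype.card V := by
    rw [hL, Multiset.length_sort, eigMultiset_eq A hA, Multiset.card_map]
    rfl
  have hpos : 0 < Fintype.card V := Fintype.card_pos_iff.mpr ⟨i⟩
  have hmem : hA.eigenvalues i ∈ L := by
    rw [hL, Multiset.mem_sort, eigMultiset_eq A hA]
    exact Multiset.mem_map_of_mem _ (Finset.mem_univ i).out
  obtain ⟨k, hk, hget⟩ := List.getElem_of_mem hmem
  have hsorted : L.Pairwise (· ≥ ·) := Multiset.pairwise_sort _ _
  have h1 : kthEig A (Fintype.card V) = L.get ⟨Fintype.card V - 1, by omega⟩ := by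
    unfold kthEig
    rw [← hL, List.getD_eq_getElem]
    rfl
  rw [h1, ← hget]
  have := hsorted.rel_get_of_le (a := ⟨k, hk⟩) (b := ⟨Fintype.card V - 1, by omega⟩)
    (by simp [Fin.le_def]; omega)
  exact this

private lemma kthEig_second (A : Matrix V V ℝ) (hA : A.IsHermitian)
    (h2 : 2 ≤ Fintype.card V) :
    ∃ i j : V, i ≠ j ∧ kthEig A 2 ≤ hA.eigenvalues i ∧ kthEig A 2 ≤ hA.eigenvalues j := by
  set L := (eigMultiset A).sort (· ≥ ·) with hL
  have hlen : L.length = Fintype.card V := by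
    rw [hL, Multiset.length_sort, eigMultiset_eq A hA, Multiset.card_map]; rfl
  have hsorted : L.Pairwise (· ≥ ·) := Multiset.pairwise_sort _ _
  have hcoe : (L : Multiset ℝ) = Finset.univ.val.map hA.eigenvalues := by
    rw [hL, Multiset.sort_eq, eigMultiset_eq A hA]
  obtain ⟨l0, l1, rest, hLeq⟩ : ∃ l0 l1 rest, L = l0 :: l1 :: rest := by
    rcases L with _ | ⟨l0, _ | ⟨l1, rest⟩⟩
    · simp at hlen; omega
    · simp at hlen; omega
    · exact ⟨l0, l1, rest, rfl⟩
  have hkth : kthEig A 2 = l1 := by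
    unfold kthEig; rw [← hL, hLeq]; rfl
  have h01 : l1 ≤ l0 := by
    rw [hLeq] at hsorted
    exact (List.pairwise_cons.mp hsorted).1 l1 (by simp)
  have hml : (l0 ::ₘ l1 ::ₘ (rest : Multiset ℝ)) = Finset.univ.val.map hA.eigenvalues := by
    rw [← hcoe, hLeq]; rfl
  have hl0 : l0 ∈ Finset.univ.val.map hA.eigenvalues := by rw [← hml]; simp
  obtain ⟨i, -, hi⟩ := Multiset.mem_map.mp hl0
  have huniv : (Finset.univ.val : Multiset V) = i ::ₘ (Finset.univ.erase i).val := by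
    rw [Finset.erase_val]
    exact (Multiset.cons_erase (Finset.mem_univ i).out).symm
  have hml2 : (l1 ::ₘ (rest : Multiset ℝ)) = (Finset.univ.erase i).val.map hA.eigenvalues := by
    have := hml
    rw [huniv, Multiset.map_cons, hi] at this
    exact (Multiset.cons_inj_right l0).mp this.symm |>.symm
  have hl1 : l1 ∈ (Finset.univ.erase i).val.map hA.eigenvalues := by rw [← hml2]; simp
  obtain ⟨j, hjmem, hj⟩ := Multiset.mem_map.mp hl1
  have hji : j ≠ i := (Finset.mem_erase.mp hjmem).1
  exact ⟨i, j, hji.symm, by rw [hkth, hi]; exact h01, by rw [hkth, hj]⟩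

private lemma signlessLaplacian_isHermitian (G : SimpleGraph V) :
    (signlessLaplacian G).IsHermitian := by
  classical
  unfold signlessLaplacian
  apply Matrix.IsHermitian.add
  · exact Matrix.isHermitian_diagonal _
  · show (G.adjMatrix ℝ)ᴴ = _
    rw [conjTranspose_eq_transpose_of_trivial, SimpleGraph.transpose_adjMatrix]

private lemma degree_congr {V : Type*} [Fintype V] (G : SimpleGraph V) (v : V)
    (i1 i2 : Fintype (G.neighborSet v)) :
    @SimpleGraph.degree _ G v i1 = @SimpleGraph.degree _ G v i2 := by
  congr!

private lemma sum_signlessLaplacian (n : ℕ) (hn : 1 ≤ n) (G : SimpleGraph (Fin n)) :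
    signlessLaplacian G + signlessLaplacian Gᶜ
      = ((n : ℝ) - 2) • (1 : Matrix (Fin n) (Fin n) ℝ) + Matrix.of (fun _ _ => (1 : ℝ)) := by
  classical
  ext v w
  unfold signlessLaplacian
  by_cases hvw : v = w
  · subst hvw
    have hdeg2 : ∀ (i2 : Fintype (G.neighborSet v)) (i : Fintype (Gᶜ.neighborSet v)),
        (@SimpleGraph.degree _ G v i2 : ℝ) + (@SimpleGraph.degree _ Gᶜ v i : ℝ)
          = (n : ℝ) - 1 := by
      intro i2 i
      have hlt : @SimpleGraph.degree _ G v i2 < n := by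
        have h := G.degree_lt_card_verts v
        rwa [degree_congr G v _ i2, Fintype.card_fin] at h
      have hdeg : @SimpleGraph.degree _ Gᶜ v i
          = n - 1 - @SimpleGraph.degree _ G v i2 := by
        have h := SimpleGraph.degree_compl (G := G) (v := v)
        rw [degree_congr Gᶜ v _ i, degree_congr G v _ i2, Fintype.card_fin] at h
        exact h
      have hsum : @SimpleGraph.degree _ G v i2 + @SimpleGraph.degree _ Gᶜ v i = n - 1 := by
        omega
      rw [← Nat.cast_add, hsum, Nat.cast_sub hn]
      simp
    simp only [Matrix.add_apply, Matrix.diagonal_apply_eq, Matrix.smul_apply,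
      Matrix.one_apply_eq, Matrix.of_apply, SimpleGraph.adjMatrix_apply,
      SimpleGraph.irrefl, if_false, add_zero]
    rw [hdeg2]
    simp
    ring
  · simp only [Matrix.add_apply, Matrix.diagonal_apply_ne _ hvw, Matrix.smul_apply,
      Matrix.one_apply_ne hvw, Matrix.of_apply, SimpleGraph.adjMatrix_apply]
    by_cases h : G.Adj v w <;>
      simp [h, hvw, SimpleGraph.compl_adj]

end Aux

theorem stmt3 (n : ℕ) (hn : 2 ≤ n) (G : SimpleGraph (Fin n)) :
    kthEig (signlessLaplacian G) 2 + kthEig (signlessLaplacian Gᶜ) n ≤ (n : ℝ) - 2 := by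
  classical
  set A := signlessLaplacian G with hAdef
  set B := signlessLaplacian Gᶜ with hBdef
  have hA : A.IsHermitian := signlessLaplacian_isHermitian G
  have hB : B.IsHermitian := signlessLaplacian_isHermitian Gᶜ
  set β := kthEig A 2 with hβ
  set γ := kthEig B n with hγ
  obtain ⟨i, j, hij, hi, hj⟩ := kthEig_second A hA (by simp [hn])
  set U : Matrix (Fin n) (Fin n) ℝ := (hA.eigenvectorUnitary : Matrix (Fin n) (Fin n) ℝ)
    with hU
  set t : Fin n → ℝ := fun m => ∑ v, U v m with ht
  obtain ⟨a, b, hab, hpos⟩ : ∃ a b : ℝ, a * t i + b * t j = 0 ∧ 0 < a ^ 2 + b ^ 2 := by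
    by_cases hc : t i = 0 ∧ t j = 0
    · exact ⟨1, 0, by rw [hc.1, hc.2]; ring, by norm_num⟩
    · refine ⟨t j, -t i, by ring, ?_⟩
      have : t i ≠ 0 ∨ t j ≠ 0 := by tauto
      rcases this with h | h <;>
        nlinarith [sq_nonneg (t i), sq_nonneg (t j), sq_pos_of_ne_zero h]
  set y : Fin n → ℝ := fun k => if k = i then a else if k = j then b else 0 with hy
  have hysum : ∀ g : Fin n → ℝ, (∑ k, y k * g k) = a * g i + b * g j := by
    intro g
    rw [← Finset.sum_subset (Finset.subset_univ ({i, j} : Finset (Fin n)))]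
    · rw [Finset.sum_pair hij]
      simp [hy, hij, Ne.symm hij]
    · intro k _ hk
      simp only [Finset.mem_insert, Finset.mem_singleton, not_or] at hk
      simp [hy, hk.1, hk.2]
  set x : Fin n → ℝ := U *ᵥ y with hx
  -- norm of x
  have hxx : x ⬝ᵥ x = a ^ 2 + b ^ 2 := by
    rw [hx, key2 A hA y]
    have : y ⬝ᵥ y = ∑ k, y k * y k := rfl
    rw [this, hysum y]
    simp [hy, hij, Ne.symm hij]
    ring
  -- Rayleigh quotient of A at x
  have hxAx : β * (a ^ 2 + b ^ 2) ≤ x ⬝ᵥ (A *ᵥ x) := by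
    rw [hx, key A hA y]
    have : (∑ k, hA.eigenvalues k * y k ^ 2) = ∑ k, y k * (hA.eigenvalues k * y k) := by
      apply Finset.sum_congr rfl; intro k _; ring
    rw [this, hysum]
    have hyi : y i = a := by simp [hy]
    have hyj : y j = b := by simp [hy, Ne.symm hij]
    rw [hyi, hyj]
    nlinarith [sq_nonneg a, sq_nonneg b, hi, hj]
  -- sum of entries of x is zero
  have hsx : (∑ v, x v) = 0 := by
    have : (∑ v, x v) = ∑ m, y m * t m := by
      rw [hx]
      simp only [mulVec, dotProduct, ht]
      rw [Finset.sum_comm]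
      apply Finset.sum_congr rfl
      intro m _
      rw [Finset.mul_sum]
      apply Finset.sum_congr rfl
      intro v _
      ring
    rw [this, hysum t, hab]
  -- Rayleigh quotient of B at x
  have hBx : x ⬝ᵥ (B *ᵥ x) = ((n : ℝ) - 2) * (x ⬝ᵥ x) - x ⬝ᵥ (A *ᵥ x) := by
    have hsum := sum_signlessLaplacian n (by omega) G
    rw [← hAdef, ← hBdef] at hsum
    have hBeq : B = (((n : ℝ) - 2) • (1 : Matrix (Fin n) (Fin n) ℝ)
        + Matrix.of (fun _ _ => (1 : ℝ))) - A := by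
      rw [← hsum]; abel
    rw [hBeq, Matrix.sub_mulVec, Matrix.add_mulVec, dotProduct_sub, dotProduct_add]
    have h1 : x ⬝ᵥ ((((n : ℝ) - 2) • (1 : Matrix (Fin n) (Fin n) ℝ)) *ᵥ x)
        = ((n : ℝ) - 2) * (x ⬝ᵥ x) := by
      rw [Matrix.smul_mulVec, Matrix.one_mulVec, dotProduct_smul, smul_eq_mul]
    have h2 : x ⬝ᵥ ((Matrix.of (fun _ _ => (1 : ℝ))) *ᵥ x) = (∑ v, x v) * (∑ v, x v) := by
      simp only [mulVec, dotProduct, Matrix.of_apply, one_mul]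
      rw [Finset.sum_mul]
    rw [h1, h2, hsx]
    ring
  -- min eigenvalue bound for B
  have hmin : γ * (x ⬝ᵥ x) ≤ x ⬝ᵥ (B *ᵥ x) := by
    set UB : Matrix (Fin n) (Fin n) ℝ := (hB.eigenvectorUnitary : Matrix (Fin n) (Fin n) ℝ)
      with hUB
    have hstB : star UB = UBᵀ := by ext p q; simp [Matrix.star_apply]
    have hUB1 : UB * UBᵀ = 1 := by
      rw [← hstB]; exact Unitary.coe_mul_star_self hB.eigenvectorUnitary
    set z : Fin n → ℝ := UBᵀ *ᵥ x with hz
    have hxz : x = UB *ᵥ z := by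
      rw [hz, mulVec_mulVec, hUB1, one_mulVec]
    have hγle : ∀ k, γ ≤ hB.eigenvalues k := by
      intro k
      have := kthEig_min B hB k
      rwa [Fintype.card_fin] at this
    calc γ * (x ⬝ᵥ x) = γ * (z ⬝ᵥ z) := by rw [hxz, key2 B hB z]
      _ = ∑ k, γ * z k ^ 2 := by
          simp only [dotProduct]
          rw [Finset.mul_sum]
          apply Finset.sum_congr rfl
          intro k _
          ring
      _ ≤ ∑ k, hB.eigenvalues k * z k ^ 2 := by
          apply Finset.sum_le_sum
          intro k _
          exact mul_le_mul_of_nonneg_right (hγle k) (sq_nonneg _)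
      _ = x ⬝ᵥ (B *ᵥ x) := by rw [hxz, key B hB z]
  -- combine
  have hfinal : γ * (a ^ 2 + b ^ 2) ≤ ((n : ℝ) - 2) * (a ^ 2 + b ^ 2) - β * (a ^ 2 + b ^ 2) := by
    calc γ * (a ^ 2 + b ^ 2) = γ * (x ⬝ᵥ x) := by rw [hxx]
      _ ≤ x ⬝ᵥ (B *ᵥ x) := hmin
      _ = ((n : ℝ) - 2) * (x ⬝ᵥ x) - x ⬝ᵥ (A *ᵥ x) := hBx
      _ ≤ ((n : ℝ) - 2) * (a ^ 2 + b ^ 2) - β * (a ^ 2 + b ^ 2) := by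
          rw [hxx]
          linarith [hxAx]
  nlinarith [hfinal, hpos]
end

section
/- For any simple graph G on n ≥ 2 vertices, q_2(G) + q_2(\overline{G}) ≤ 2n - 4, where q_2 denotes the second largest signless Laplacian eigenvalue. -/
open Matrix

section Aux

open Finset SimpleGraph

variable {n : ℕ}

private lemma adj_isHermitian (G : SimpleGraph (Fin n)) [DecidableRel G.Adj] :
    (G.adjMatrix ℝ).IsHermitian := by
  unfold Matrix.IsHermitian
  ext i j
  simp [Matrix.conjTranspose_apply, G.adj_comm]

lemma sl_isHermitian (G : SimpleGraph (Fin n)) : (signlessLaplacian G).IsHermitian := by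
  unfold signlessLaplacian
  letI := Classical.decRel G.Adj
  exact (Matrix.isHermitian_diagonal _).add (adj_isHermitian G)

private lemma sum_neighbor_comm (G : SimpleGraph (Fin n)) [DecidableRel G.Adj]
    (f : Fin n → Fin n → ℝ) :
    ∑ v, ∑ u ∈ G.neighborFinset v, f v u = ∑ v, ∑ u ∈ G.neighborFinset v, f u v := by
  simp_rw [SimpleGraph.neighborFinset_eq_filter, Finset.sum_filter]
  rw [Finset.sum_comm]
  exact Finset.sum_congr rfl fun x _ => Finset.sum_congr rfl fun y _ =>
    if_congr (G.adj_comm y x) rfl rfl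

lemma sl_posSemidef (G : SimpleGraph (Fin n)) : (signlessLaplacian G).PosSemidef := by
  refine Matrix.PosSemidef.of_dotProduct_mulVec_nonneg (sl_isHermitian G) fun x => ?_
  unfold signlessLaplacian
  letI := Classical.decRel G.Adj
  have hstar : star x = x := funext fun k => star_trivial _
  rw [hstar, add_mulVec, dotProduct_add]
  have h1 : x ⬝ᵥ (Matrix.diagonal (fun v => (G.degree v : ℝ)) *ᵥ x)
      = ∑ v, (G.degree v : ℝ) * x v ^ 2 := by
    simp [dotProduct, Matrix.mulVec_diagonal]
    exact Finset.sum_congr rfl fun v _ => by ring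
  have h2 : x ⬝ᵥ (G.adjMatrix ℝ *ᵥ x) = ∑ v, ∑ u ∈ G.neighborFinset v, x v * x u := by
    simp [dotProduct, SimpleGraph.adjMatrix_mulVec_apply, Finset.mul_sum]
  rw [h1, h2]
  have e1 : ∀ v, (G.degree v : ℝ) * x v ^ 2 = ∑ _u ∈ G.neighborFinset v, x v ^ 2 := by
    intro v
    rw [Finset.sum_const, SimpleGraph.degree, nsmul_eq_mul]
  have swap1 : ∑ v, ∑ u ∈ G.neighborFinset v, x u ^ 2
      = ∑ v, ∑ u ∈ G.neighborFinset v, x v ^ 2 :=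
    sum_neighbor_comm G (fun a b => x b ^ 2)
  have key : 2 * ((∑ v, (G.degree v : ℝ) * x v ^ 2) + ∑ v, ∑ u ∈ G.neighborFinset v, x v * x u)
      = ∑ v, ∑ u ∈ G.neighborFinset v, (x v + x u) ^ 2 := by
    simp_rw [e1]
    have expand : ∀ v, ∑ u ∈ G.neighborFinset v, (x v + x u) ^ 2
        = (∑ u ∈ G.neighborFinset v, x v ^ 2) + (2 * ∑ u ∈ G.neighborFinset v, x v * x u)
          + ∑ u ∈ G.neighborFinset v, x u ^ 2 := by
      intro v
      rw [Finset.mul_sum, ← Finset.sum_add_distrib, ← Finset.sum_add_distrib]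
      exact Finset.sum_congr rfl fun u _ => by ring
    simp_rw [expand]
    rw [Finset.sum_add_distrib, Finset.sum_add_distrib, swap1, ← Finset.mul_sum]
    ring
  have hnn : 0 ≤ ∑ v, ∑ u ∈ G.neighborFinset v, (x v + x u) ^ 2 :=
    Finset.sum_nonneg fun v _ => Finset.sum_nonneg fun u _ => sq_nonneg _
  nlinarith [key]

private lemma deg_card {V : Type*} [Fintype V] (G : SimpleGraph V) (v : V)
    [h : Fintype (G.neighborSet v)] :
    G.degree v = Nat.card (G.neighborSet v) := by
  rw [← SimpleGraph.card_neighborSet_eq_degree, Nat.card_eq_fintype_card]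

private lemma ncard_compl (G : SimpleGraph (Fin n)) (v : Fin n) :
    Nat.card ((Gᶜ).neighborSet v) = n - 1 - Nat.card (G.neighborSet v) := by
  classical
  simp only [Nat.card_eq_fintype_card, SimpleGraph.card_neighborSet_eq_degree]
  simpa using SimpleGraph.degree_compl (G := G) (v := v)

private lemma ncard_lt (G : SimpleGraph (Fin n)) (v : Fin n) :
    Nat.card (G.neighborSet v) < n := by
  classical
  simp only [Nat.card_eq_fintype_card, SimpleGraph.card_neighborSet_eq_degree]
  simpa using SimpleGraph.degree_lt_card_verts (G := G) v

lemma sl_compl_eq (G : SimpleGraph (Fin n)) :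
    signlessLaplacian (Gᶜ) = ((n : ℝ) - 2) • (1 : Matrix (Fin n) (Fin n) ℝ)
      + Matrix.of (fun _ _ => (1 : ℝ)) - signlessLaplacian G := by
  classical
  unfold signlessLaplacian
  ext i j
  by_cases hij : i = j
  · subst hij
    have h0 : ¬ (Gᶜ).Adj i i := (Gᶜ).loopless.irrefl i
    have h1 : ¬ G.Adj i i := G.loopless.irrefl i
    simp only [Matrix.sub_apply, Matrix.add_apply, Matrix.diagonal_apply_eq,
      SimpleGraph.adjMatrix_apply, if_neg h0, if_neg h1, Matrix.smul_apply,
      Matrix.one_apply_eq, Matrix.of_apply, smul_eq_mul, mul_one]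
    rw [deg_card, deg_card, ncard_compl]
    have hd := ncard_lt G i
    have hn1 : 1 ≤ n := i.pos
    rw [Nat.cast_sub (by omega), Nat.cast_sub (by omega)]
    push_cast
    ring
  · have hadj : (Gᶜ).Adj i j ↔ ¬ G.Adj i j := by
      simp [SimpleGraph.compl_adj, hij]
    simp only [Matrix.sub_apply, Matrix.add_apply, Matrix.diagonal_apply_ne _ hij,
      SimpleGraph.adjMatrix_apply, Matrix.smul_apply, Matrix.one_apply_ne hij,
      Matrix.of_apply, smul_eq_mul, mul_zero, zero_add]
    by_cases h : G.Adj i j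
    · rw [if_neg (by simp [hadj, h]), if_pos h]; ring
    · rw [if_pos (hadj.mpr h), if_neg h]; ring

lemma kthEig2_le {N : ℕ} {A : Matrix (Fin N) (Fin N) ℝ} (hA : A.IsHermitian)
    {c : ℝ}
    (hpsd : (c • (1 : Matrix (Fin N) (Fin N) ℝ) + Matrix.of (fun _ _ => (1 : ℝ))
      - A).PosSemidef)
    (hN : 2 ≤ N) :
    kthEig A 2 ≤ c := by
  classical
  set μ := hA.eigenvalues with hμ
  unfold kthEig
  have hsorted := Multiset.pairwise_sort (α := ℝ) (eigMultiset A) (· ≥ ·)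
  have hml : (((eigMultiset A).sort (· ≥ ·) : List ℝ) : Multiset ℝ)
      = Finset.univ.val.map μ := by
    rw [Multiset.sort_eq, eigMultiset, dif_pos hA]
  have hlen : ((eigMultiset A).sort (· ≥ ·)).length = N := by
    rw [Multiset.length_sort, eigMultiset, dif_pos hA]
    simp
  generalize hL : (eigMultiset A).sort (· ≥ ·) = l at hsorted hml hlen ⊢
  obtain ⟨a, b, r, rfl⟩ : ∃ a b r, l = a :: b :: r := by
    match l, hlen with
    | [], hlen => simp at hlen; omega
    | [x], hlen => simp at hlen; omega
    | x :: y :: r, _ => exact ⟨x, y, r, rfl⟩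
  show (a :: b :: r : List ℝ).getD (2 - 1) 0 ≤ c
  have hgd : (a :: b :: r : List ℝ).getD (2 - 1) 0 = b := rfl
  rw [hgd]
  have hab : b ≤ a := by
    have := (List.pairwise_cons.mp hsorted).1 b (by simp)
    exact this
  -- extract indices i ≠ j with μ i = a, μ j = b
  have hmem_a : a ∈ Finset.univ.val.map μ := by
    rw [← hml]; simp
  obtain ⟨i, _, hia⟩ := Multiset.mem_map.mp hmem_a
  have hiu : i ∈ (Finset.univ.val : Multiset (Fin N)) := by simp
  have hcons : (Finset.univ.val : Multiset (Fin N)) = i ::ₘ Finset.univ.val.erase i :=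
    (Multiset.cons_erase hiu).symm
  have hmap2 : (a ::ₘ (b ::ₘ (r : Multiset ℝ))) = a ::ₘ (Finset.univ.val.erase i).map μ := by
    rw [← hia] at hml ⊢
    calc (μ i ::ₘ (b ::ₘ (r : Multiset ℝ)))
        = ((μ i :: b :: r : List ℝ) : Multiset ℝ) := rfl
      _ = Finset.univ.val.map μ := hml
      _ = (i ::ₘ Finset.univ.val.erase i).map μ := by rw [← hcons]
      _ = μ i ::ₘ (Finset.univ.val.erase i).map μ := by rw [Multiset.map_cons]
  have hb_mem : b ∈ (Finset.univ.val.erase i).map μ := by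
    have := (Multiset.cons_inj_right a).mp hmap2
    rw [← this]
    simp
  obtain ⟨j, hj_mem, hjb⟩ := Multiset.mem_map.mp hb_mem
  have hij : j ≠ i := by
    rintro rfl
    exact Multiset.Nodup.notMem_erase Finset.univ.nodup hj_mem
  -- eigenvectors
  set v : Fin N → ℝ := ⇑(hA.eigenvectorBasis i) with hvdef
  set w : Fin N → ℝ := ⇑(hA.eigenvectorBasis j) with hwdef
  have hv : A *ᵥ v = μ i • v := hA.mulVec_eigenvectorBasis i
  have hw : A *ᵥ w = μ j • w := hA.mulVec_eigenvectorBasis j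
  have horth := hA.eigenvectorBasis.orthonormal
  have key : ∀ i' j' : Fin N, (⇑(hA.eigenvectorBasis i') : Fin N → ℝ) ⬝ᵥ
      ⇑(hA.eigenvectorBasis j') = if i' = j' then 1 else 0 := by
    intro i' j'
    have h := orthonormal_iff_ite.mp horth i' j'
    rw [EuclideanSpace.inner_eq_star_dotProduct] at h
    have hst : star ((hA.eigenvectorBasis i').ofLp)
        = (⇑(hA.eigenvectorBasis i') : Fin N → ℝ) := funext fun k => star_trivial _
    rw [hst, dotProduct_comm] at h
    exact h
  have hvv : v ⬝ᵥ v = 1 := by rw [hvdef]; simpa using key i i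
  have hww : w ⬝ᵥ w = 1 := by rw [hwdef]; simpa using key j j
  have hvw : v ⬝ᵥ w = 0 := by
    rw [hvdef, hwdef]
    simpa [Ne.symm hij] using key i j
  have hwv : w ⬝ᵥ v = 0 := by rw [dotProduct_comm]; exact hvw
  set sv := ∑ k, v k with hsv
  set sw := ∑ k, w k with hsw
  have hineq : ∀ p q : ℝ,
      μ i * p ^ 2 + μ j * q ^ 2 ≤ c * (p ^ 2 + q ^ 2) + (p * sv + q * sw) ^ 2 := by
    intro p q
    have h0 := hpsd.dotProduct_mulVec_nonneg (p • v + q • w)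
    have hstar : star (p • v + q • w) = p • v + q • w := funext fun k => star_trivial _
    rw [hstar] at h0
    rw [Matrix.sub_mulVec, Matrix.add_mulVec, Matrix.smul_mulVec,
      Matrix.one_mulVec] at h0
    have hsum : ∀ k : Fin N, (p • v + q • w) k = p * v k + q * w k := fun k => rfl
    have hJ : (Matrix.of (fun _ _ => (1 : ℝ)) : Matrix (Fin N) (Fin N) ℝ) *ᵥ (p • v + q • w)
        = fun _ : Fin N => p * sv + q * sw := by
      ext k
      simp only [Matrix.mulVec, dotProduct, Matrix.of_apply, one_mul]
      simp only [hsum]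
      rw [Finset.sum_add_distrib, ← Finset.mul_sum, ← Finset.mul_sum, hsv, hsw]
    have hAx : A *ᵥ (p • v + q • w) = p • (μ i • v) + q • (μ j • w) := by
      rw [Matrix.mulVec_add, Matrix.mulVec_smul, Matrix.mulVec_smul, hv, hw]
    rw [hJ, hAx] at h0
    rw [dotProduct_sub, dotProduct_add, dotProduct_smul] at h0
    have hd1 : (p • v + q • w) ⬝ᵥ (p • v + q • w) = p ^ 2 + q ^ 2 := by
      simp only [dotProduct_add, add_dotProduct, dotProduct_smul,
        smul_dotProduct, hvv, hww, hvw, hwv, smul_eq_mul]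
      ring
    have hd2 : (p • v + q • w) ⬝ᵥ (fun _ : Fin N => p * sv + q * sw)
        = (p * sv + q * sw) * (p * sv + q * sw) := by
      simp only [dotProduct]
      simp only [hsum]
      rw [← Finset.sum_mul, Finset.sum_add_distrib, ← Finset.mul_sum, ← Finset.mul_sum,
        hsv, hsw]
    have hd3 : (p • v + q • w) ⬝ᵥ (p • (μ i • v) + q • (μ j • w))
        = μ i * p ^ 2 + μ j * q ^ 2 := by
      simp only [dotProduct_add, add_dotProduct, dotProduct_smul,
        smul_dotProduct, hvv, hww, hvw, hwv, smul_eq_mul]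
      ring
    rw [hd1, hd2, hd3] at h0
    simp only [smul_eq_mul] at h0
    nlinarith [h0]
  by_cases hz : sw = 0 ∧ sv = 0
  · have := hineq 0 1
    rw [← hjb]
    nlinarith [this, hz.1, hz.2]
  · have := hineq sw (-sv)
    have hcancel : sw * sv + (-sv) * sw = 0 := by ring
    have hpos : 0 < sw ^ 2 + (-sv) ^ 2 := by
      rcases (not_and_or.mp hz) with h | h
      · have h2 : 0 < sw ^ 2 := lt_of_le_of_ne (sq_nonneg sw) (Ne.symm (pow_ne_zero 2 h))
        nlinarith [sq_nonneg sv]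
      · have h2 : 0 < sv ^ 2 := lt_of_le_of_ne (sq_nonneg sv) (Ne.symm (pow_ne_zero 2 h))
        nlinarith [sq_nonneg sw]
    rw [← hjb]
    have hle : μ i * sw ^ 2 + μ j * (-sv) ^ 2 ≤ c * (sw ^ 2 + (-sv) ^ 2) := by
      have h2 : (sw * sv + (-sv) * sw) ^ 2 = 0 := by rw [hcancel]; ring
      nlinarith [this]
    have hbi : μ j ≤ μ i := by rw [hia, hjb]; exact hab
    nlinarith [hle, sq_nonneg sw, sq_nonneg sv, hbi, hpos]

end Aux

theorem stmt5 (n : ℕ) (hn : 2 ≤ n) (G : SimpleGraph (Fin n)) :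
    kthEig (signlessLaplacian G) 2 + kthEig (signlessLaplacian Gᶜ) 2 ≤ 2 * (n : ℝ) - 4 := by
  have h1 : kthEig (signlessLaplacian G) 2 ≤ (n : ℝ) - 2 := by
    refine kthEig2_le (sl_isHermitian G) ?_ hn
    rw [← sl_compl_eq G]
    exact sl_posSemidef Gᶜ
  have h2 : kthEig (signlessLaplacian Gᶜ) 2 ≤ (n : ℝ) - 2 := by
    refine kthEig2_le (sl_isHermitian Gᶜ) ?_ hn
    have h := sl_compl_eq (Gᶜ)
    rw [compl_compl] at h
    rw [← h]
    exact sl_posSemidef G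
  linarith
end

section
/- Let G be a simple graph and let S be a set of at least 2 vertices of G that is a clique (every two distinct vertices of S are adjacent) such that all vertices of S have the same set of neighbors outside S. Then all vertices of S have a common degree d, and d - 1 is an eigenvalue of the signless Laplacian Q(G) with multiplicity at least |S| - 1. -/
open Matrix

lemma mem_span_eigen {ι M : Type*} [Fintype ι] [AddCommGroup M] [Module ℝ M]
    (b : Module.Basis ι ℝ M) (L : M →ₗ[ℝ] M) (lam : ι → ℝ) (hb : ∀ i, L (b i) = lam i • b i)
    (μ : ℝ) (x : M) (hx : L x = μ • x) :
    x ∈ Submodule.span ℝ ((fun i => b i) '' {i | lam i = μ}) := by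
  classical
  have hx2 : x = ∑ i, b.repr x i • b i := (b.sum_repr x).symm
  have hL : L x = ∑ i, (b.repr x i * lam i) • b i := by
    conv_lhs => rw [hx2, map_sum]
    simp [hb, smul_smul]
  have hrepr : ∀ j, b.repr x j * lam j = μ * b.repr x j := by
    intro j
    have h1 : b.repr (L x) j = b.repr x j * lam j := by
      rw [hL, Module.Basis.repr_sum_self]
    have h2 : b.repr (L x) j = μ * b.repr x j := by
      rw [hx, _root_.map_smul]; simp
    rw [h1] at h2; linarith
  have hzero : ∀ i, lam i ≠ μ → b.repr x i = 0 := by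
    intro i hi
    have h2 : (lam i - μ) * b.repr x i = 0 := by ring_nf; nlinarith [hrepr i]
    rcases mul_eq_zero.mp h2 with h3 | h3
    · exact absurd (by linarith : lam i = μ) hi
    · exact h3
  rw [hx2]
  refine Submodule.sum_mem _ fun i _ => ?_
  by_cases h : lam i = μ
  · exact Submodule.smul_mem _ _ (Submodule.subset_span ⟨i, h, rfl⟩)
  · simp [hzero i h]

theorem stmt6 {V : Type*} [Fintype V] [DecidableEq V] (G : SimpleGraph V)
    (S : Finset V) (hS : 2 ≤ S.card)
    (hclique : ∀ u ∈ S, ∀ v ∈ S, u ≠ v → G.Adj u v)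
    (hnbr : ∀ u ∈ S, ∀ v ∈ S, ∀ w ∉ S, (G.Adj u w ↔ G.Adj v w)) :
    ∃ d : ℕ, (∀ v ∈ S, gdeg G v = d) ∧
      S.card - 1 ≤ (eigMultiset (signlessLaplacian G)).count ((d : ℝ) - 1) := by
  letI := Classical.decRel G.Adj
  have hgd : ∀ v, gdeg G v = G.degree v := fun v => rfl
  obtain ⟨u, hu⟩ : ∃ u, u ∈ S := Finset.card_pos.mp (by omega)
  -- all degrees equal
  have hNsplit : ∀ v ∈ S, G.neighborFinset v = S.erase v ∪ (G.neighborFinset v \ S) := by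
    intro v hv
    ext w
    simp only [Finset.mem_union, Finset.mem_erase, Finset.mem_sdiff,
      SimpleGraph.mem_neighborFinset]
    constructor
    · intro h
      by_cases hw : w ∈ S
      · exact Or.inl ⟨G.ne_of_adj h.symm, hw⟩
      · exact Or.inr ⟨h, hw⟩
    · rintro (⟨hne, hw⟩ | ⟨h, _⟩)
      · exact hclique v hv w hw (Ne.symm hne)
      · exact h
  have hout : ∀ v ∈ S, G.neighborFinset v \ S = G.neighborFinset u \ S := by
    intro v hv
    ext w
    simp only [Finset.mem_sdiff, SimpleGraph.mem_neighborFinset]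
    constructor
    · rintro ⟨h, hw⟩; exact ⟨(hnbr v hv u hu w hw).mp h, hw⟩
    · rintro ⟨h, hw⟩; exact ⟨(hnbr v hv u hu w hw).mpr h, hw⟩
  have hdeg : ∀ v ∈ S, gdeg G v = (S.card - 1) + (G.neighborFinset u \ S).card := by
    intro v hv
    rw [hgd, SimpleGraph.degree, hNsplit v hv, Finset.card_union_of_disjoint, hout v hv,
      Finset.card_erase_of_mem hv]
    exact Finset.disjoint_left.mpr fun w hw hw2 => (Finset.mem_sdiff.mp hw2).2
      (Finset.mem_of_mem_erase hw)
  set d : ℕ := (S.card - 1) + (G.neighborFinset u \ S).card with hd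
  refine ⟨d, hdeg, ?_⟩
  set μ : ℝ := (d : ℝ) - 1 with hμ
  -- key eigenvector computation
  have key : ∀ a ∈ S, ∀ c ∈ S, a ≠ c →
      signlessLaplacian G *ᵥ (Pi.single a 1 - Pi.single c 1 : V → ℝ)
        = μ • (Pi.single a 1 - Pi.single c 1 : V → ℝ) := by
    intro a ha c hc hac
    have hdega : (G.degree a : ℝ) = d := by
      rw [← hgd]; exact_mod_cast congrArg Nat.cast (hdeg a ha)
    have hdegc : (G.degree c : ℝ) = d := by
      rw [← hgd]; exact_mod_cast congrArg Nat.cast (hdeg c hc)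
    funext w
    have hsum : ∀ z : V, (G.adjMatrix ℝ *ᵥ (Pi.single z 1 : V → ℝ)) w
        = if G.Adj w z then (1:ℝ) else 0 := by
      intro z
      rw [SimpleGraph.adjMatrix_mulVec_apply]
      by_cases h : G.Adj w z
      · rw [if_pos h]
        rw [Finset.sum_eq_single z (fun b _ hb => Pi.single_eq_of_ne hb 1)
          (fun hz => absurd (SimpleGraph.mem_neighborFinset G w z |>.mpr h) hz)]
        exact Pi.single_eq_same z 1
      · rw [if_neg h]
        refine Finset.sum_eq_zero fun b hb => ?_
        refine Pi.single_eq_of_ne (fun hbz => h ?_) 1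
        rw [← hbz]; exact (SimpleGraph.mem_neighborFinset G w b).mp hb
    show (signlessLaplacian G *ᵥ _) w = _
    rw [signlessLaplacian, Matrix.add_mulVec, Pi.add_apply, Matrix.mulVec_diagonal,
      Matrix.mulVec_sub]
    simp only [Pi.sub_apply]
    rw [hsum a, hsum c]
    rcases eq_or_ne w a with rfl | hwa
    · have : G.Adj w c := hclique w ha c hc hac
      simp [this, G.loopless.irrefl w, hdega, Pi.single_eq_of_ne hac, hμ]
      ring
    · rcases eq_or_ne w c with rfl | hwc
      · have : G.Adj w a := hclique w hc a ha (Ne.symm hac)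
        simp [this, G.loopless.irrefl w, hdegc, Pi.single_eq_of_ne hwa, hμ]
        ring
      · have hadj : G.Adj w a ↔ G.Adj w c := by
          by_cases hw : w ∈ S
          · constructor
            · intro _; exact hclique w hw c hc hwc
            · intro _; exact hclique w hw a ha hwa
          · rw [G.adj_comm w a, G.adj_comm w c]
            exact hnbr a ha c hc w hw
        simp [Pi.single_eq_of_ne hwa, Pi.single_eq_of_ne hwc, hadj]
  -- Hermitian
  have hA : (signlessLaplacian G).IsHermitian := by
    rw [show signlessLaplacian G = Matrix.diagonal (fun v => (G.degree v : ℝ)) + G.adjMatrix ℝ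
      from rfl]
    refine Matrix.IsHermitian.add (Matrix.isHermitian_diagonal _) ?_
    ext i j
    simp [Matrix.conjTranspose_apply, G.adj_comm i j]
  set b := hA.eigenvectorBasis with hb
  set lam := hA.eigenvalues with hlam
  set I := Finset.univ.filter (fun i => lam i = μ) with hI
  letI : DecidableEq (EuclideanSpace ℝ V) := Classical.decEq _
  have hcount : (eigMultiset (signlessLaplacian G)).count μ = I.card := by
    rw [eigMultiset, dif_pos hA, Multiset.count_map, hI, Finset.card_def, Finset.filter_val]
    congr 1
    exact Multiset.filter_congr (fun a _ => eq_comm)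
  -- the linear map
  let L : EuclideanSpace ℝ V →ₗ[ℝ] EuclideanSpace ℝ V := Matrix.toEuclideanLin (signlessLaplacian G)
  have hbL : ∀ i, L (b.toBasis i) = lam i • b.toBasis i := by
    intro i
    simp only [OrthonormalBasis.coe_toBasis]
    apply WithLp.ofLp_injective
    exact hA.mulVec_eigenvectorBasis i
  set W := Submodule.span ℝ ((fun i => b.toBasis i) '' {i | lam i = μ}) with hW
  let f : {v // v ∈ S.erase u} → EuclideanSpace ℝ V :=
    fun v => WithLp.toLp 2 (Pi.single u 1 - Pi.single (v : V) 1 : V → ℝ)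
  have hfW : ∀ v, f v ∈ W := by
    intro v
    obtain ⟨hvu, hvS⟩ := Finset.mem_erase.mp v.2
    exact mem_span_eigen b.toBasis L lam hbL μ (f v)
      (by apply WithLp.ofLp_injective; exact key u hu (v : V) hvS (Ne.symm hvu))
  have hli : LinearIndependent ℝ f := by
    rw [Fintype.linearIndependent_iff]
    intro g hg i
    obtain ⟨hiu, hiS⟩ := Finset.mem_erase.mp i.2
    have hg' : (∑ v : {v // v ∈ S.erase u}, g v • (Pi.single u 1 - Pi.single (v : V) 1 : V → ℝ))
        = (0 : V → ℝ) := by simpa [f] using congrArg WithLp.ofLp hg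
    have h0 := congrFun hg' (i : V)
    simp only [Finset.sum_apply, Pi.smul_apply, Pi.sub_apply, Pi.zero_apply,
      smul_eq_mul, Pi.single_apply] at h0
    simpa [hiu, Subtype.coe_inj] using h0
  let f' : {v // v ∈ S.erase u} → W := fun v => ⟨f v, hfW v⟩
  have hli' : LinearIndependent ℝ f' := by
    apply LinearIndependent.of_comp W.subtype
    exact hli
  have hcard1 : Fintype.card {v // v ∈ S.erase u} ≤ Module.finrank ℝ W :=
    hli'.fintype_card_le_finrank
  have hcard2 : Module.finrank ℝ W ≤ I.card := by
    have himg : (fun i => b.toBasis i) '' {i | lam i = μ} = ↑(I.image fun i => b.toBasis i) := by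
      ext x
      simp only [Finset.coe_image, hI, Finset.coe_filter, Finset.mem_univ, true_and]
    rw [hW, himg]
    exact (finrank_span_finset_le_card _).trans Finset.card_image_le
  have hcard3 : Fintype.card {v // v ∈ S.erase u} = S.card - 1 := by
    rw [Fintype.card_coe, Finset.card_erase_of_mem hu]
  rw [hcount]
  omega
end

section
/- Let G be a simple graph and let S be a set of at least 2 vertices of G that is an independent set such that all vertices of S have the same neighborhood. Then all vertices of S have a common degree d, and d is an eigenvalue of the signless Laplacian Q(G) with multiplicity at least |S| - 1. -/
open Matrix

open Finset in

lemma herm_transpose {n : Type*} [Fintype n] {A : Matrix n n ℝ} (hA : A.IsHermitian) :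
    Aᵀ = A := by
  ext i j
  have := congrFun (congrFun hA.eq i) j
  simpa [Matrix.conjTranspose_apply] using this

lemma herm_dot {n : Type*} [Fintype n] {A : Matrix n n ℝ} (hA : A.IsHermitian)
    (y z : n → ℝ) : (A *ᵥ y) ⬝ᵥ z = y ⬝ᵥ (A *ᵥ z) := by
  conv_lhs => rw [← herm_transpose hA]
  rw [mulVec_transpose, ← dotProduct_mulVec]

lemma count_eig_ge {n : Type*} [Fintype n] [DecidableEq n] {A : Matrix n n ℝ}
    (hA : A.IsHermitian) {ι : Type*} [Fintype ι] (μ : ℝ) (x : ι → EuclideanSpace ℝ n)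
    (hx : LinearIndependent ℝ x) (hev : ∀ i, A *ᵥ (x i : n → ℝ) = μ • (x i : n → ℝ)) :
    Fintype.card ι ≤ (Finset.univ.filter (fun j => hA.eigenvalues j = μ)).card := by
  classical
  set b := hA.eigenvectorBasis with hb
  set T : Finset n := Finset.univ.filter (fun j => hA.eigenvalues j = μ) with hT
  have key : ∀ i j, j ∉ T → inner (𝕜 := ℝ) (b j) (x i) = 0 := by
    intro i j hj
    have hlam : hA.eigenvalues j ≠ μ := by simpa [hT] using hj
    have h1 : (A *ᵥ ⇑(b j)) ⬝ᵥ (x i : n → ℝ) = hA.eigenvalues j * (⇑(b j) ⬝ᵥ (x i : n → ℝ)) := by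
      rw [hA.mulVec_eigenvectorBasis]; simp [smul_dotProduct]; exact Or.inl rfl
    have h2 : (⇑(b j)) ⬝ᵥ (A *ᵥ (x i : n → ℝ)) = μ * (⇑(b j) ⬝ᵥ (x i : n → ℝ)) := by
      rw [hev i]
      simp only [dotProduct, PiLp.smul_apply, Pi.smul_apply, Finset.mul_sum, smul_eq_mul]
      exact Finset.sum_congr rfl fun k _ => by ring
    have h3 := herm_dot hA (⇑(b j)) (x i : n → ℝ)
    rw [h1, h2] at h3
    have h4 : (⇑(b j)) ⬝ᵥ (x i : n → ℝ) = 0 := by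
      by_contra hne
      exact hlam (mul_right_cancel₀ hne h3)
    have hinner : inner (𝕜 := ℝ) (b j) (x i) = (⇑(b j)) ⬝ᵥ (x i : n → ℝ) := by
      simp [PiLp.inner_apply, dotProduct, RCLike.inner_apply]
      exact Finset.sum_congr rfl fun k _ => mul_comm _ _
    rw [hinner, h4]
  set W : Submodule ℝ (EuclideanSpace ℝ n) :=
    Submodule.span ℝ (Set.range fun j : T => (b j : EuclideanSpace ℝ n)) with hW
  have hmem : ∀ i, x i ∈ W := by
    intro i
    have hsum := b.sum_repr' (x i)
    rw [← hsum]
    apply Submodule.sum_mem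
    intro j _
    by_cases hj : j ∈ T
    · exact Submodule.smul_mem _ _ (Submodule.subset_span ⟨⟨j, hj⟩, rfl⟩)
    · rw [key i j hj, zero_smul]; exact Submodule.zero_mem _
  let x' : ι → W := fun i => ⟨x i, hmem i⟩
  have hx' : LinearIndependent ℝ x' := by
    apply LinearIndependent.of_comp W.subtype
    convert hx
    rfl
  have h1 : Fintype.card ι ≤ Module.finrank ℝ W := hx'.fintype_card_le_finrank
  have h2 : Module.finrank ℝ W ≤ T.card := by
    refine le_trans (finrank_span_le_card _) ?_
    rw [Set.toFinset_range]
    exact (Finset.card_image_le).trans (by simp)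
  exact h1.trans h2

theorem stmt7 {V : Type*} [Fintype V] [DecidableEq V] (G : SimpleGraph V)
    (S : Finset V) (hS : 2 ≤ S.card)
    (hindep : ∀ u ∈ S, ∀ v ∈ S, ¬ G.Adj u v)
    (hnbr : ∀ u ∈ S, ∀ v ∈ S, ∀ w, (G.Adj u w ↔ G.Adj v w)) :
    ∃ d : ℕ, (∀ v ∈ S, gdeg G v = d) ∧
      S.card - 1 ≤ (eigMultiset (signlessLaplacian G)).count (d : ℝ) := by
  letI := Classical.decRel G.Adj
  obtain ⟨u₀, hu₀⟩ := Finset.card_pos.1 (lt_of_lt_of_le (by norm_num) hS)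
  set d : ℕ := G.degree u₀ with hd
  have hNF : ∀ v ∈ S, G.neighborFinset v = G.neighborFinset u₀ := by
    intro v hv
    ext w
    simp only [SimpleGraph.mem_neighborFinset]
    exact hnbr v hv u₀ hu₀ w
  have hdeg : ∀ v ∈ S, gdeg G v = d := by
    intro v hv
    show G.degree v = d
    unfold SimpleGraph.degree
    rw [hNF v hv]
    rfl
  refine ⟨d, hdeg, ?_⟩
  have hadj : (G.adjMatrix ℝ).IsHermitian := by
    ext i j
    simp only [Matrix.conjTranspose_apply, SimpleGraph.adjMatrix_apply, star_trivial]
    exact if_congr (G.adj_comm j i) rfl rfl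
  have hQ : (signlessLaplacian G).IsHermitian :=
    Matrix.IsHermitian.add (Matrix.isHermitian_diagonal _) hadj
  rw [eigMultiset, dif_pos hQ]
  set Q := signlessLaplacian G with hQdef
  have hQentry : ∀ w y, Q w y =
      (if w = y then (G.degree w : ℝ) else 0) + (if G.Adj w y then 1 else 0) := by
    intro w y
    show Matrix.diagonal (fun v => (G.degree v : ℝ)) w y + (G.adjMatrix ℝ) w y = _
    rw [Matrix.diagonal_apply, SimpleGraph.adjMatrix_apply]
  -- the eigenvector family (plain functions)
  have hev : ∀ v ∈ S, v ≠ u₀ →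
      Q *ᵥ (Pi.single u₀ 1 - Pi.single v 1 : V → ℝ)
        = (d : ℝ) • (Pi.single u₀ 1 - Pi.single v 1 : V → ℝ) := by
    intro v hv hvne
    have hnatdeg : G.degree v = d := hdeg v hv
    have hdv : (G.degree v : ℝ) = (d : ℝ) := by exact_mod_cast hnatdeg
    funext w
    have hAeq : (if G.Adj w u₀ then (1:ℝ) else 0) = (if G.Adj w v then 1 else 0) :=
      if_congr ((G.adj_comm w u₀).trans ((hnbr u₀ hu₀ v hv w).trans (G.adj_comm v w)))
        rfl rfl
    rw [mulVec_sub]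
    simp only [mulVec_single, Pi.sub_apply, Pi.smul_apply, Pi.single_apply, smul_eq_mul,
      MulOpposite.op_one, one_smul, Matrix.col_apply]
    rw [hQentry w u₀, hQentry w v, hAeq]
    by_cases h1 : w = u₀
    · subst h1
      rw [if_pos rfl, if_neg (fun h : w = v => hvne (h.symm)), if_pos rfl,
        if_neg (fun h : w = v => hvne (h.symm))]
      rw [← hd]
      ring
    · by_cases h2 : w = v
      · subst h2
        rw [if_neg h1, if_pos rfl, if_neg h1, if_pos rfl, hdv]
        ring
      · rw [if_neg h1, if_neg h2, if_neg h1, if_neg h2]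
        ring
  -- linear independence
  have hli : LinearIndependent ℝ
      (fun v : ↥(S.erase u₀) => (Pi.single u₀ 1 - Pi.single (v : V) 1 : V → ℝ)) := by
    rw [Fintype.linearIndependent_iff]
    intro g hg i
    have hiu : (i : V) ≠ u₀ := Finset.ne_of_mem_erase i.2
    have h := congrFun hg (i : V)
    simp only [Finset.sum_apply, Pi.smul_apply, Pi.sub_apply, Pi.single_apply, smul_eq_mul,
      Pi.zero_apply, hiu, if_false, Subtype.coe_inj, zero_sub, mul_neg, mul_ite, mul_one,
      mul_zero, Finset.sum_neg_distrib, neg_eq_zero, Finset.sum_ite_eq] at h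
    simpa using h
  -- move to EuclideanSpace
  let x : ↥(S.erase u₀) → EuclideanSpace ℝ V :=
    fun v => WithLp.toLp 2 (Pi.single u₀ 1 - Pi.single (v : V) 1 : V → ℝ)
  have hli2 : LinearIndependent ℝ x := by
    have h := hli.map' (WithLp.linearEquiv 2 ℝ (V → ℝ)).symm.toLinearMap
      (LinearEquiv.ker _)
    exact h
  have hev2 : ∀ i : ↥(S.erase u₀), Q *ᵥ (x i : V → ℝ) = (d : ℝ) • (x i : V → ℝ) :=
    fun i => hev (i : V) (Finset.mem_of_mem_erase i.2) (Finset.ne_of_mem_erase i.2)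
  have hcard := count_eig_ge hQ ((d : ℝ)) x hli2 hev2
  rw [Fintype.card_coe, Finset.card_erase_of_mem hu₀] at hcard
  refine hcard.trans (le_of_eq ?_)
  rw [Multiset.count_map, Finset.card_def, Finset.filter_val]
  congr 1
  exact Multiset.filter_congr (fun x _ => eq_comm)
end

section
/- Let G be a simple graph with maximum degree d_1 and second maximum degree d_2 (i.e., d_2 is the second largest value in the degree sequence, with multiplicity). Then the second largest signless Laplacian eigenvalue satisfies q_2(G) ≥ d_2 - 1. -/
open Matrix

section Helpers

open Matrix RealInnerProductSpace

variable {V : Type*} [Fintype V] [DecidableEq V] {A : Matrix V V ℝ}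

lemma rayleigh_expand (hA : A.IsHermitian) (x : EuclideanSpace ℝ V) :
    ⟪x, (WithLp.toLp 2 (A *ᵥ x) : EuclideanSpace ℝ V)⟫ =
      ∑ j, hA.eigenvalues j * (hA.eigenvectorBasis.repr x j)^2 := by
  set B := hA.eigenvectorBasis with hB
  have hx : (∑ j, B.repr x j • B j) = x := B.sum_repr x
  have key : (WithLp.toLp 2 (A *ᵥ x) : EuclideanSpace ℝ V)
      = ∑ j, (B.repr x j * hA.eigenvalues j) • (B j : EuclideanSpace ℝ V) := by
    calc (WithLp.toLp 2 (A *ᵥ x) : EuclideanSpace ℝ V)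
        = WithLp.toLp 2 (A.mulVecLin (WithLp.ofLp (∑ j, B.repr x j • B j))) := by rw [hx]; rfl
      _ = ∑ j, (B.repr x j * hA.eigenvalues j) • (B j : EuclideanSpace ℝ V) := by
          rw [WithLp.ofLp_sum, map_sum, WithLp.toLp_sum]
          refine Finset.sum_congr rfl fun j _ => ?_
          rw [WithLp.ofLp_smul, _root_.map_smul, WithLp.toLp_smul]
          show B.repr x j • WithLp.toLp 2 (A *ᵥ ⇑(B j)) = _
          rw [hA.mulVec_eigenvectorBasis, WithLp.toLp_smul, WithLp.toLp_ofLp]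
          rw [smul_smul]
  rw [key, inner_sum]
  refine Finset.sum_congr rfl fun j _ => ?_
  rw [real_inner_smul_right, real_inner_comm, ← B.repr_apply_apply]
  ring

lemma norm_sq_expand (B : OrthonormalBasis V ℝ (EuclideanSpace ℝ V)) (x : EuclideanSpace ℝ V) :
    ⟪x, x⟫ = ∑ j, (B.repr x j)^2 := by
  rw [← B.repr.inner_map_map x x]
  simp only [PiLp.inner_apply, RCLike.inner_apply, conj_trivial, sq]

lemma sum_ite_two (u v : V) (huv : u ≠ v) (a b : ℝ) (y : V → ℝ) :
    ∑ w, (if w = u then a else if w = v then b else 0) * y w = a * y u + b * y v := by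
  have hpt : ∀ w, (if w = u then a else if w = v then b else 0) * y w
      = (if w = u then a * y u else 0) + (if w = v then b * y v else 0) := by
    intro w
    by_cases h1 : w = u
    · subst h1; simp [huv]
    · by_cases h2 : w = v
      · subst h2; simp [h1]
      · simp [h1, h2]
  simp only [hpt, Finset.sum_add_distrib, Finset.sum_ite_eq', Finset.mem_univ, if_true]

end Helpers

section Counting

variable {α : Type*} [LinearOrder α]

lemma sorted_countP_ge (s : Multiset α) (d₀ : α) (h : 2 ≤ Multiset.card s) :
    2 ≤ s.countP (fun x => (s.sort (· ≥ ·)).getD 1 d₀ ≤ x) := by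
  set L := s.sort (· ≥ ·) with hLdef
  have hsorted : L.Pairwise (· ≥ ·) := s.pairwise_sort _
  have hL : (L : Multiset α) = s := s.sort_eq _
  clear_value L
  subst hL
  rcases L with _ | ⟨a, _ | ⟨b, t⟩⟩
  · simp at h
  · simp at h
  · have hba : b ≤ a := (List.pairwise_cons.mp hsorted).1 b (by simp)
    rw [Multiset.coe_countP]
    simp only [List.getD_cons_succ, List.getD_cons_zero, List.countP_cons]
    simp [hba]

lemma sorted_countP_le_one (s : Multiset α) (d₀ : α) (h : 2 ≤ Multiset.card s) :
    s.countP (fun x => (s.sort (· ≥ ·)).getD 1 d₀ < x) ≤ 1 := by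
  set L := s.sort (· ≥ ·) with hLdef
  have hsorted : L.Pairwise (· ≥ ·) := s.pairwise_sort _
  have hL : (L : Multiset α) = s := s.sort_eq _
  clear_value L
  subst hL
  rcases L with _ | ⟨a, _ | ⟨b, t⟩⟩
  · simp at h
  · simp at h
  · rw [Multiset.coe_countP]
    simp only [List.getD_cons_succ, List.getD_cons_zero]
    have h0 : List.countP (fun x => decide (b < x)) (b :: t) = 0 := by
      rw [List.countP_eq_zero]
      intro x hx
      simp only [decide_eq_true_eq, not_lt]
      rcases List.mem_cons.mp hx with rfl | hx
      · exact le_refl x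
      · exact (List.pairwise_cons.mp (List.pairwise_cons.mp hsorted).2).1 x hx
    rw [List.countP_cons, h0]
    split_ifs <;> simp

end Counting

section Entries

open Matrix

variable {V : Type*} [Fintype V] [DecidableEq V] (G : SimpleGraph V)

lemma sL_hermitian : (signlessLaplacian G).IsHermitian := by
  letI := Classical.decRel G.Adj
  show (signlessLaplacian G)ᴴ = signlessLaplacian G
  ext i j
  by_cases h : i = j
  · subst h; simp [signlessLaplacian]
  · simp only [signlessLaplacian, Matrix.conjTranspose_apply, Matrix.add_apply,
      Matrix.diagonal_apply, h, Ne.symm h, if_neg, SimpleGraph.adjMatrix_apply, star_trivial]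
    simp [G.adj_comm j i]

lemma sL_diag (u : V) : signlessLaplacian G u u = (gdeg G u : ℝ) := by
  letI := Classical.decRel G.Adj
  simp [signlessLaplacian, gdeg]

lemma sL_offdiag [DecidableRel G.Adj] (u v : V) (huv : u ≠ v) :
    signlessLaplacian G u v = if G.Adj u v then 1 else 0 := by
  simp only [signlessLaplacian, Matrix.add_apply, Matrix.diagonal_apply, huv, if_neg,
    if_false, SimpleGraph.adjMatrix_apply, zero_add]
  split_ifs <;> simp

end Entries

set_option maxHeartbeats 1000000 in
open RealInnerProductSpace in
theorem stmt10 (n : ℕ) (hn : 2 ≤ n) (G : SimpleGraph (Fin n)) :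
    (kthLargestDegree G 2 : ℝ) - 1 ≤ kthEig (signlessLaplacian G) 2 := by
  classical
  letI := Classical.decRel G.Adj
  set Q := signlessLaplacian G with hQdef
  have hQ : Q.IsHermitian := sL_hermitian G
  set B := hQ.eigenvectorBasis with hBdef
  set q2 := kthEig Q 2 with hq2def
  set d2 := kthLargestDegree G 2 with hd2def
  -- two vertices of large degree
  have hdcard : Multiset.card (Finset.univ.val.map (gdeg G)) = n := by simp
  have hdegs : 2 ≤ Multiset.countP (fun x => d2 ≤ x) (Finset.univ.val.map (gdeg G)) := by
    have h := sorted_countP_ge (Finset.univ.val.map (gdeg G)) 0 (by rw [hdcard]; exact hn)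
    exact h
  have hfilter : 2 ≤ (Finset.univ.filter (fun w : Fin n => d2 ≤ gdeg G w)).card := by
    rw [Multiset.countP_map] at hdegs
    exact hdegs
  obtain ⟨u, hu, v, hv, huv⟩ := Finset.one_lt_card.mp (lt_of_lt_of_le one_lt_two hfilter)
  rw [Finset.mem_filter] at hu hv
  have hdu : (d2 : ℝ) ≤ (gdeg G u : ℝ) := by exact_mod_cast Nat.cast_le.mpr hu.2
  have hdv : (d2 : ℝ) ≤ (gdeg G v : ℝ) := by exact_mod_cast Nat.cast_le.mpr hv.2
  -- at most one eigenvalue above q2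
  have hM : eigMultiset Q = Finset.univ.val.map hQ.eigenvalues := by
    rw [eigMultiset, dif_pos hQ]
  have hMcard : Multiset.card (eigMultiset Q) = n := by simp [hM]
  have hlt : Multiset.countP (fun x => q2 < x) (eigMultiset Q) ≤ 1 := by
    have h := sorted_countP_le_one (eigMultiset Q) 0 (by rw [hMcard]; exact hn)
    exact h
  have hfilt2 : (Finset.univ.filter (fun i : Fin n => q2 < hQ.eigenvalues i)).card ≤ 1 := by
    rw [hM, Multiset.countP_map] at hlt
    exact hlt
  haveI : Nonempty (Fin n) := ⟨⟨0, by omega⟩⟩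
  obtain ⟨i0, hi0sub⟩ := Finset.card_le_one_iff_subset_singleton.mp hfilt2
  have hi0 : ∀ i : Fin n, i ≠ i0 → hQ.eigenvalues i ≤ q2 := by
    intro i hi
    by_contra hcon
    push_neg at hcon
    have : i ∈ Finset.univ.filter (fun i : Fin n => q2 < hQ.eigenvalues i) := by
      simp [hcon]
    have := hi0sub this
    simp at this
    exact hi this
  -- vector construction
  set xab : ℝ → ℝ → EuclideanSpace ℝ (Fin n) :=
    fun a b => (WithLp.toLp 2 (fun w => if w = u then a else if w = v then b else 0) : EuclideanSpace ℝ (Fin n))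
    with hxab
  set p := B.repr (xab 1 0) i0 with hp
  set q := B.repr (xab 0 1) i0 with hq
  obtain ⟨a, b, hab0, hpos⟩ : ∃ a b : ℝ, a * p + b * q = 0 ∧ 0 < a ^ 2 + b ^ 2 := by
    by_cases hp0 : p = 0
    · exact ⟨1, 0, by simp [hp0], by norm_num⟩
    · refine ⟨q, -p, by ring, ?_⟩
      have h1 : 0 < p ^ 2 := lt_of_le_of_ne (sq_nonneg p) (Ne.symm (pow_ne_zero 2 hp0))
      nlinarith [sq_nonneg q]
  have hlincomb : xab a b = a • xab 1 0 + b • xab 0 1 := by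
    ext w
    show _ = a • (xab 1 0) w + b • (xab 0 1) w
    by_cases h1 : w = u
    · subst h1; simp [hxab, huv]
    · by_cases h2 : w = v
      · subst h2; simp [hxab, h1]
      · simp [hxab, h1, h2]
  set x := xab a b with hx
  have hxw : ∀ w, x w = if w = u then a else if w = v then b else 0 := fun w => rfl
  have hrepr0 : B.repr x i0 = 0 := by
    rw [hlincomb, map_add, _root_.map_smul, _root_.map_smul]
    show a * p + b * q = 0
    exact hab0
  have hxu : x u = a := by simp [hxw]
  have hxv : x v = b := by simp [hxw, Ne.symm huv]
  -- inner products
  have hinner : ∀ y : EuclideanSpace ℝ (Fin n), ⟪x, y⟫ = a * y u + b * y v := by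
    intro y
    simp only [PiLp.inner_apply, RCLike.inner_apply, conj_trivial]
    have h := sum_ite_two u v huv a b (fun w => y w)
    rw [← h]
    exact Finset.sum_congr rfl fun w _ => mul_comm _ _
  have hxx : ⟪x, x⟫ = a ^ 2 + b ^ 2 := by
    rw [hinner x, hxu, hxv]; ring
  -- lower bound
  have hmvu : (Q *ᵥ (x : Fin n → ℝ)) u = a * Q u u + b * Q u v := by
    show ∑ z, Q u z * (x : Fin n → ℝ) z = _
    rw [← sum_ite_two u v huv a b (fun w => Q u w)]
    refine Finset.sum_congr rfl fun w _ => ?_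
    rw [hxw]; ring
  have hmvv : (Q *ᵥ (x : Fin n → ℝ)) v = a * Q v u + b * Q v v := by
    show ∑ z, Q v z * (x : Fin n → ℝ) z = _
    rw [← sum_ite_two u v huv a b (fun w => Q v w)]
    refine Finset.sum_congr rfl fun w _ => ?_
    rw [hxw]; ring
  have hQuu : Q u u = (gdeg G u : ℝ) := sL_diag G u
  have hQvv : Q v v = (gdeg G v : ℝ) := sL_diag G v
  have hQuv : Q u v = if G.Adj u v then 1 else 0 := sL_offdiag G u v huv
  have hQvu : Q v u = if G.Adj u v then 1 else 0 := by
    have h : Q v u = if G.Adj v u then 1 else 0 := sL_offdiag G v u (Ne.symm huv)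
    rw [h]
    simp [G.adj_comm v u]
  have hlow : ((d2 : ℝ) - 1) * (a ^ 2 + b ^ 2) ≤ ⟪x, (WithLp.toLp 2 (Q *ᵥ x) : EuclideanSpace ℝ (Fin n))⟫ := by
    rw [hinner (WithLp.toLp 2 (Q *ᵥ x) : EuclideanSpace ℝ (Fin n))]
    show _ ≤ a * (Q *ᵥ (x : Fin n → ℝ)) u + b * (Q *ᵥ (x : Fin n → ℝ)) v
    rw [hmvu, hmvv, hQuu, hQvv, hQuv, hQvu]
    by_cases hadj : G.Adj u v
    · simp only [if_pos hadj]
      nlinarith [sq_nonneg (a + b), sq_nonneg a, sq_nonneg b]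
    · simp only [if_neg hadj]
      nlinarith [sq_nonneg a, sq_nonneg b]
  -- upper bound
  have hup : ⟪x, (WithLp.toLp 2 (Q *ᵥ x) : EuclideanSpace ℝ (Fin n))⟫ ≤ q2 * (a ^ 2 + b ^ 2) := by
    rw [rayleigh_expand hQ x]
    have step : ∀ j : Fin n, hQ.eigenvalues j * (B.repr x j) ^ 2 ≤ q2 * (B.repr x j) ^ 2 := by
      intro j
      by_cases hj : j = i0
      · subst hj; rw [hrepr0]; simp
      · exact mul_le_mul_of_nonneg_right (hi0 j hj) (sq_nonneg _)
    calc ∑ j, hQ.eigenvalues j * (B.repr x j) ^ 2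
        ≤ ∑ j, q2 * (B.repr x j) ^ 2 := Finset.sum_le_sum fun j _ => step j
      _ = q2 * ∑ j, (B.repr x j) ^ 2 := by rw [Finset.mul_sum]
      _ = q2 * ⟪x, x⟫ := by rw [norm_sq_expand B x]
      _ = q2 * (a ^ 2 + b ^ 2) := by rw [hxx]
  have := hlow.trans hup
  have hfin : (d2 : ℝ) - 1 ≤ q2 := by
    have h2 := (mul_le_mul_iff_of_pos_right hpos).mp this
    exact h2
  exact hfin
end

section
/- Let B be a principal submatrix of a real symmetric n×n matrix A, obtained by selecting an m-element subset of indices. Then the eigenvalues of B interlace those of A: λ_i(A) ≥ λ_i(B) ≥ λ_{n-m+i}(A) for 1 ≤ i ≤ m, where eigenvalues are listed in non-increasing order. -/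
open Matrix

section Count
variable {N : ℕ} (A : Matrix (Fin N) (Fin N) ℝ)

lemma length_sortedEig (hA : A.IsHermitian) :
    ((eigMultiset A).sort (· ≥ ·)).length = N := by
  rw [Multiset.length_sort, eigMultiset, dif_pos hA]
  simp

lemma sorted_anti (L : List ℝ) (hs : L.Pairwise (· ≥ ·)) :
    ∀ i j (hi : i < L.length) (hj : j < L.length), i ≤ j → L[j] ≤ L[i] := by
  intro i j hi hj hij
  rcases eq_or_lt_of_le hij with h | h
  · subst h; exact le_rfl
  · exact List.pairwise_iff_getElem.1 hs i j hi hj h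

lemma countP_eig (p : ℝ → Prop) [DecidablePred p] (hA : A.IsHermitian) :
    Multiset.countP p (eigMultiset A)
      = (Finset.univ.filter (fun j => p (hA.eigenvalues j))).card := by
  rw [eigMultiset, dif_pos hA, Multiset.countP_map]
  rfl

lemma kth_card_ge (hA : A.IsHermitian) (k : ℕ) (h1 : 1 ≤ k) (h2 : k ≤ N) :
    k ≤ (Finset.univ.filter (fun j => kthEig A k ≤ hA.eigenvalues j)).card := by
  set L := ((eigMultiset A).sort (· ≥ ·)) with hL
  have hlen : L.length = N := length_sortedEig A hA
  have hk : k - 1 < L.length := by omega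
  have hkth : kthEig A k = L[k-1] := List.getD_eq_getElem L 0 hk
  have hsorted : L.Pairwise (· ≥ ·) := Multiset.pairwise_sort _ _
  have key : k ≤ Multiset.countP (fun x => kthEig A k ≤ x) (eigMultiset A) := by
    have hsub : (↑(L.take k) : Multiset ℝ) ≤ eigMultiset A := by
      conv_rhs => rw [← Multiset.sort_eq (eigMultiset A) (· ≥ ·)]
      exact (List.take_sublist k L).subperm
    have h2 : Multiset.countP (fun x => kthEig A k ≤ x) (↑(L.take k) : Multiset ℝ) = k := by
      rw [Multiset.coe_countP, List.countP_eq_length.2, List.length_take]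
      · omega
      · intro a ha
        obtain ⟨i, hi, rfl⟩ := List.mem_iff_getElem.1 ha
        have hik : i < k := by have : (L.take k).length = min k L.length := List.length_take; omega
        have hilen : i < L.length := by omega
        simp only [decide_eq_true_eq, List.getElem_take, hkth]
        exact sorted_anti L hsorted i (k-1) hilen hk (by omega)
    exact le_trans (le_of_eq h2.symm) (Multiset.countP_le_of_le (fun x => kthEig A k ≤ x) hsub)
  exact (countP_eig A (fun x => kthEig A k ≤ x) hA) ▸ key

lemma kth_card_le (hA : A.IsHermitian) (k : ℕ) (h1 : 1 ≤ k) (h2 : k ≤ N) :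
    N - k + 1 ≤ (Finset.univ.filter (fun j => hA.eigenvalues j ≤ kthEig A k)).card := by
  set L := ((eigMultiset A).sort (· ≥ ·)) with hL
  have hlen : L.length = N := length_sortedEig A hA
  have hk : k - 1 < L.length := by omega
  have hkth : kthEig A k = L[k-1] := List.getD_eq_getElem L 0 hk
  have hsorted : L.Pairwise (· ≥ ·) := Multiset.pairwise_sort _ _
  have key : N - k + 1 ≤ Multiset.countP (fun x => x ≤ kthEig A k) (eigMultiset A) := by
    have hsub : (↑(L.drop (k-1)) : Multiset ℝ) ≤ eigMultiset A := by
      conv_rhs => rw [← Multiset.sort_eq (eigMultiset A) (· ≥ ·)]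
      exact (List.drop_sublist (k-1) L).subperm
    have h2 : Multiset.countP (fun x => x ≤ kthEig A k) (↑(L.drop (k-1)) : Multiset ℝ)
        = N - k + 1 := by
      rw [Multiset.coe_countP, List.countP_eq_length.2, List.length_drop]
      · omega
      · intro a ha
        obtain ⟨i, hi, rfl⟩ := List.mem_iff_getElem.1 ha
        have hilen : k - 1 + i < L.length := by
          have : (L.drop (k-1)).length = L.length - (k-1) := List.length_drop; omega
        simp only [decide_eq_true_eq, List.getElem_drop, hkth]
        exact sorted_anti L hsorted (k-1) (k-1+i) hk hilen (by omega)
    exact le_trans (le_of_eq h2.symm) (Multiset.countP_le_of_le (fun x => x ≤ kthEig A k) hsub)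
  exact (countP_eig A (fun x => x ≤ kthEig A k) hA) ▸ key

end Count

section Rayleigh
open Submodule
variable {N : ℕ} {A : Matrix (Fin N) (Fin N) ℝ}

lemma transpose_eq_self (hA : A.IsHermitian) : Aᵀ = A := by
  ext i j
  have := congrFun (congrFun hA.eq j) i
  simpa [Matrix.conjTranspose_apply] using this.symm

lemma inner_eq_dot (u v : EuclideanSpace ℝ (Fin N)) :
    inner ℝ u v = (⇑u) ⬝ᵥ (⇑v : Fin N → ℝ) := by
  simp [PiLp.inner_apply, dotProduct]
  exact Finset.sum_congr rfl fun _ _ => mul_comm _ _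

lemma repr_mulVec (hA : A.IsHermitian) (x : EuclideanSpace ℝ (Fin N)) (j : Fin N) :
    hA.eigenvectorBasis.repr (WithLp.toLp 2 (A *ᵥ ⇑x : Fin N → ℝ) : EuclideanSpace ℝ (Fin N)) j
      = hA.eigenvalues j * hA.eigenvectorBasis.repr x j := by
  set b := hA.eigenvectorBasis with hb
  have key : (⇑(b j) : Fin N → ℝ) ⬝ᵥ (A *ᵥ ⇑x)
      = hA.eigenvalues j * ((⇑(b j) : Fin N → ℝ) ⬝ᵥ ⇑x) := by
    rw [Matrix.dotProduct_mulVec, ← Matrix.mulVec_transpose, transpose_eq_self hA, hb,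
      hA.mulVec_eigenvectorBasis j, smul_dotProduct]
    rfl
  rw [OrthonormalBasis.repr_apply_apply, OrthonormalBasis.repr_apply_apply,
    inner_eq_dot, inner_eq_dot]
  exact key

lemma rayleigh_eq (hA : A.IsHermitian) (x : EuclideanSpace ℝ (Fin N)) :
    (⇑x) ⬝ᵥ (A *ᵥ ⇑x) = ∑ j, hA.eigenvalues j * (hA.eigenvectorBasis.repr x j)^2 := by
  set b := hA.eigenvectorBasis with hb
  have h1 : (⇑x) ⬝ᵥ (A *ᵥ ⇑x)
      = inner ℝ x (WithLp.toLp 2 (A *ᵥ ⇑x : Fin N → ℝ) : EuclideanSpace ℝ (Fin N)) := (inner_eq_dot x (WithLp.toLp 2 (A *ᵥ ⇑x))).symm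
  rw [h1, ← b.repr.inner_map_map x _, PiLp.inner_apply]
  simp only [RCLike.inner_apply, starRingEnd_apply, star_trivial]
  refine Finset.sum_congr rfl fun j _ => ?_
  rw [repr_mulVec hA x j]
  ring

lemma inner_self_eq (hA : A.IsHermitian) (x : EuclideanSpace ℝ (Fin N)) :
    (inner ℝ x x : ℝ) = ∑ j, (hA.eigenvectorBasis.repr x j)^2 := by
  rw [← hA.eigenvectorBasis.repr.inner_map_map x x, PiLp.inner_apply]
  simp only [RCLike.inner_apply, starRingEnd_apply, star_trivial]
  exact Finset.sum_congr rfl fun j _ => (sq _).symm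



lemma repr_zero_of_span (hA : A.IsHermitian) (s : Finset (Fin N)) (x : EuclideanSpace ℝ (Fin N))
    (hx : x ∈ span ℝ (⇑hA.eigenvectorBasis '' ↑s)) :
    ∀ j ∉ s, hA.eigenvectorBasis.repr x j = 0 := by
  induction hx using Submodule.span_induction with
  | mem y h =>
    obtain ⟨i, hi, rfl⟩ := h
    intro j hj
    rw [OrthonormalBasis.repr_self]
    rw [EuclideanSpace.single_apply]
    simp only [ite_eq_right_iff]
    intro h
    exact absurd (h ▸ hi) hj
  | zero => simp
  | add y z hy hz ihy ihz => intro j hj; simp [ihy j hj, ihz j hj]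
  | smul a y hy ih => intro j hj; simp [ih j hj]

lemma finrank_span_eig (hA : A.IsHermitian) (s : Finset (Fin N)) :
    Module.finrank ℝ (span ℝ (⇑hA.eigenvectorBasis '' ↑s)) = s.card := by
  have hli : LinearIndependent ℝ (fun j : ↥(↑s : Set (Fin N)) => hA.eigenvectorBasis j) :=
    (hA.eigenvectorBasis.orthonormal.linearIndependent).comp _ Subtype.val_injective
  have h := finrank_span_eq_card hli
  rw [show Set.range (fun j : ↥(↑s : Set (Fin N)) => hA.eigenvectorBasis j)
      = ⇑hA.eigenvectorBasis '' ↑s by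
    rw [show (fun j : ↥(↑s : Set (Fin N)) => hA.eigenvectorBasis j)
        = ⇑hA.eigenvectorBasis ∘ Subtype.val from rfl, Set.range_comp, Subtype.range_coe]] at h
  rw [h]; simp

lemma exists_ne_zero_mem_inf (W₁ W₂ : Submodule ℝ (EuclideanSpace ℝ (Fin N)))
    (h : N < Module.finrank ℝ W₁ + Module.finrank ℝ W₂) :
    ∃ x, x ≠ 0 ∧ x ∈ W₁ ∧ x ∈ W₂ := by
  have h1 : Module.finrank ℝ ↥(W₁ ⊔ W₂) ≤ N := by
    simpa [finrank_euclideanSpace_fin] using Submodule.finrank_le (W₁ ⊔ W₂)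
  have h2 := Submodule.finrank_sup_add_finrank_inf_eq W₁ W₂
  have h3 : 0 < Module.finrank ℝ ↥(W₁ ⊓ W₂) := by omega
  have : Nontrivial ↥(W₁ ⊓ W₂) := Module.finrank_pos_iff.mp h3
  obtain ⟨y, hy⟩ := exists_ne (0 : ↥(W₁ ⊓ W₂))
  exact ⟨↑y, by simpa using hy, (Submodule.mem_inf.mp y.2).1, (Submodule.mem_inf.mp y.2).2⟩

lemma rayleigh_le_on_span (hA : A.IsHermitian) (s : Finset (Fin N)) (c : ℝ)
    (hc : ∀ j ∈ s, hA.eigenvalues j ≤ c) (x : EuclideanSpace ℝ (Fin N))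
    (hx : x ∈ span ℝ (⇑hA.eigenvectorBasis '' ↑s)) :
    (⇑x) ⬝ᵥ (A *ᵥ ⇑x) ≤ c * inner ℝ x x := by
  rw [rayleigh_eq hA, inner_self_eq hA, Finset.mul_sum]
  refine Finset.sum_le_sum fun j _ => ?_
  by_cases hj : j ∈ s
  · exact mul_le_mul_of_nonneg_right (hc j hj) (sq_nonneg _)
  · rw [repr_zero_of_span hA s x hx j hj]
    simp

lemma rayleigh_ge_on_span (hA : A.IsHermitian) (s : Finset (Fin N)) (c : ℝ)
    (hc : ∀ j ∈ s, c ≤ hA.eigenvalues j) (x : EuclideanSpace ℝ (Fin N))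
    (hx : x ∈ span ℝ (⇑hA.eigenvectorBasis '' ↑s)) :
    c * inner ℝ x x ≤ (⇑x) ⬝ᵥ (A *ᵥ ⇑x) := by
  rw [rayleigh_eq hA, inner_self_eq hA, Finset.mul_sum]
  refine Finset.sum_le_sum fun j _ => ?_
  by_cases hj : j ∈ s
  · exact mul_le_mul_of_nonneg_right (hc j hj) (sq_nonneg _)
  · rw [repr_zero_of_span hA s x hx j hj]
    simp

lemma inner_self_pos' {x : EuclideanSpace ℝ (Fin N)} (hx : x ≠ 0) : 0 < (inner ℝ x x : ℝ) := by
  have h1 : (inner ℝ x x : ℝ) ≠ 0 := fun h => hx (inner_self_eq_zero.1 h)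
  exact lt_of_le_of_ne real_inner_self_nonneg (Ne.symm h1)

end Rayleigh

section MinMax
variable {N : ℕ} {A : Matrix (Fin N) (Fin N) ℝ}

lemma span_high (hA : A.IsHermitian) (k : ℕ) (h1 : 1 ≤ k) (h2 : k ≤ N) :
    ∃ W : Submodule ℝ (EuclideanSpace ℝ (Fin N)), k ≤ Module.finrank ℝ W ∧
      ∀ x ∈ W, kthEig A k * (inner ℝ x x : ℝ) ≤ (⇑x) ⬝ᵥ (A *ᵥ ⇑x) := by
  set s := Finset.univ.filter (fun j => kthEig A k ≤ hA.eigenvalues j) with hs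
  refine ⟨Submodule.span ℝ (⇑hA.eigenvectorBasis '' ↑s), ?_, ?_⟩
  · rw [finrank_span_eig hA s]
    exact kth_card_ge A hA k h1 h2
  · intro x hx
    exact rayleigh_ge_on_span hA s _ (fun j hj => (Finset.mem_filter.1 hj).2) x hx

lemma span_low (hA : A.IsHermitian) (k : ℕ) (h1 : 1 ≤ k) (h2 : k ≤ N) :
    ∃ W : Submodule ℝ (EuclideanSpace ℝ (Fin N)), N - k + 1 ≤ Module.finrank ℝ W ∧
      ∀ x ∈ W, (⇑x) ⬝ᵥ (A *ᵥ ⇑x) ≤ kthEig A k * (inner ℝ x x : ℝ) := by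
  set s := Finset.univ.filter (fun j => hA.eigenvalues j ≤ kthEig A k) with hs
  refine ⟨Submodule.span ℝ (⇑hA.eigenvectorBasis '' ↑s), ?_, ?_⟩
  · rw [finrank_span_eig hA s]
    exact kth_card_le A hA k h1 h2
  · intro x hx
    exact rayleigh_le_on_span hA s _ (fun j hj => (Finset.mem_filter.1 hj).2) x hx

lemma exists_low (hA : A.IsHermitian) (k : ℕ) (h1 : 1 ≤ k) (h2 : k ≤ N)
    (W : Submodule ℝ (EuclideanSpace ℝ (Fin N))) (hW : k ≤ Module.finrank ℝ W) :
    ∃ x, x ≠ 0 ∧ x ∈ W ∧ (⇑x) ⬝ᵥ (A *ᵥ ⇑x) ≤ kthEig A k * (inner ℝ x x : ℝ) := by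
  obtain ⟨W₂, hd, hb⟩ := span_low hA k h1 h2
  obtain ⟨x, hx0, hx1, hx2⟩ := exists_ne_zero_mem_inf W W₂ (by omega)
  exact ⟨x, hx0, hx1, hb x hx2⟩

lemma exists_high (hA : A.IsHermitian) (k : ℕ) (h1 : 1 ≤ k) (h2 : k ≤ N)
    (W : Submodule ℝ (EuclideanSpace ℝ (Fin N))) (hW : N - k + 1 ≤ Module.finrank ℝ W) :
    ∃ x, x ≠ 0 ∧ x ∈ W ∧ kthEig A k * (inner ℝ x x : ℝ) ≤ (⇑x) ⬝ᵥ (A *ᵥ ⇑x) := by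
  obtain ⟨W₂, hd, hb⟩ := span_high hA k h1 h2
  obtain ⟨x, hx0, hx1, hx2⟩ := exists_ne_zero_mem_inf W W₂ (by omega)
  exact ⟨x, hx0, hx1, hb x hx2⟩

end MinMax

section Embed
variable {m n : ℕ} (f : Fin m → Fin n)

/-- Extension by zero along an injection, as a linear map of Euclidean spaces. -/
noncomputable def emb : EuclideanSpace ℝ (Fin m) →ₗ[ℝ] EuclideanSpace ℝ (Fin n) where
  toFun y := WithLp.toLp 2 (fun k => ∑ j, if f j = k then y j else 0 : Fin n → ℝ)
  map_add' y z := by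
    ext k
    show (∑ j, if f j = k then (y + z) j else 0)
        = (∑ j, if f j = k then y j else 0) + (∑ j, if f j = k then z j else 0)
    rw [← Finset.sum_add_distrib]
    refine Finset.sum_congr rfl fun j _ => ?_
    have h : (y + z) j = y j + z j := rfl
    rw [h]
    split_ifs <;> simp
  map_smul' a y := by
    ext k
    show (∑ j, if f j = k then (a • y) j else 0)
        = a * (∑ j, if f j = k then y j else 0)
    rw [Finset.mul_sum]
    refine Finset.sum_congr rfl fun j _ => ?_
    have h : (a • y) j = a * y j := rfl
    rw [h]
    split_ifs <;> simp

lemma emb_dot (y : EuclideanSpace ℝ (Fin m)) (v : Fin n → ℝ) :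
    (⇑(emb f y)) ⬝ᵥ v = ∑ j, y j * v (f j) := by
  change (∑ k, (emb f y) k * v k) = _
  have h : ∀ k, emb f y k * v k = ∑ j, if f j = k then y j * v k else 0 := by
    intro k
    show (∑ j, if f j = k then y j else 0) * v k = _
    rw [Finset.sum_mul]
    refine Finset.sum_congr rfl fun j _ => ?_
    split_ifs <;> simp
  simp only [h]
  rw [Finset.sum_comm]
  refine Finset.sum_congr rfl fun j _ => ?_
  simp [Finset.sum_ite_eq]

lemma emb_apply_f (hf : Function.Injective f) (y : EuclideanSpace ℝ (Fin m)) (j : Fin m) :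
    emb f y (f j) = y j := by
  show (∑ j', if f j' = f j then y j' else 0) = y j
  have : ∀ j', (if f j' = f j then y j' else 0) = if j' = j then y j' else 0 := by
    intro j'
    simp [hf.eq_iff]
  simp only [this]
  simp

lemma emb_inj (hf : Function.Injective f) : Function.Injective (emb f) := by
  intro y z h
  ext j
  have h2 : emb f y (f j) = emb f z (f j) := by rw [h]
  rwa [emb_apply_f f hf, emb_apply_f f hf] at h2

lemma emb_rayleigh (A : Matrix (Fin n) (Fin n) ℝ) (y : EuclideanSpace ℝ (Fin m)) :
    (⇑(emb f y)) ⬝ᵥ (A *ᵥ ⇑(emb f y)) = (⇑y) ⬝ᵥ ((A.submatrix f f) *ᵥ ⇑y) := by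
  rw [emb_dot]
  rw [dotProduct]
  refine Finset.sum_congr rfl fun j _ => ?_
  congr 1
  show (A *ᵥ ⇑(emb f y)) (f j) = _
  rw [Matrix.mulVec, dotProduct_comm, emb_dot]
  rw [Matrix.mulVec, dotProduct]
  refine Finset.sum_congr rfl fun j' _ => ?_
  rw [Matrix.submatrix_apply, mul_comm]

lemma emb_inner (hf : Function.Injective f) (y : EuclideanSpace ℝ (Fin m)) :
    (inner ℝ (emb f y) (emb f y) : ℝ) = (inner ℝ y y : ℝ) := by
  rw [inner_eq_dot, inner_eq_dot, emb_dot]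
  rw [dotProduct]
  refine Finset.sum_congr rfl fun j _ => ?_
  show y j * emb f y (f j) = y j * y j
  rw [emb_apply_f f hf]

end Embed

theorem stmt19 (n m : ℕ) (A : Matrix (Fin n) (Fin n) ℝ) (hA : A.IsHermitian)
    (f : Fin m → Fin n) (hf : Function.Injective f) :
    ∀ i, 1 ≤ i → i ≤ m →
      kthEig (A.submatrix f f) i ≤ kthEig A i ∧
      kthEig A (n - m + i) ≤ kthEig (A.submatrix f f) i := by
  intro i h1 h2
  have hB : (A.submatrix f f).IsHermitian := hA.submatrix f
  have hmn : m ≤ n := by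
    simpa using Fintype.card_le_of_injective f hf
  have hin : i ≤ n := le_trans h2 hmn
  constructor
  · -- kthEig B i ≤ kthEig A i
    obtain ⟨W, hWd, hWb⟩ := span_high hB i h1 h2
    have hW'd : i ≤ Module.finrank ℝ (W.map (emb f)) := by
      rwa [← (Submodule.equivMapOfInjective (emb f) (emb_inj f hf) W).finrank_eq]
    obtain ⟨x, hx0, hxW, hxlow⟩ := exists_low hA i h1 hin (W.map (emb f)) hW'd
    obtain ⟨y, hyW, rfl⟩ := Submodule.mem_map.1 hxW
    have hray := emb_rayleigh f A y
    have hge := hWb y hyW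
    have hpos : (0:ℝ) < inner ℝ ((emb f) y) ((emb f) y) := inner_self_pos' hx0
    have hei := emb_inner f hf y
    rw [hei] at hpos hxlow
    have key : kthEig (A.submatrix f f) i * (inner ℝ y y : ℝ) ≤ kthEig A i * inner ℝ y y := by
      linarith [hge, hray, hxlow]
    exact le_of_mul_le_mul_right key hpos
  · -- kthEig A (n-m+i) ≤ kthEig B i
    set k := n - m + i with hk
    have hk1 : 1 ≤ k := by omega
    have hk2 : k ≤ n := by omega
    obtain ⟨W, hWd, hWb⟩ := span_low hB i h1 h2
    have hW'd : n - k + 1 ≤ Module.finrank ℝ (W.map (emb f)) := by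
      rw [← (Submodule.equivMapOfInjective (emb f) (emb_inj f hf) W).finrank_eq]
      omega
    obtain ⟨x, hx0, hxW, hxhigh⟩ := exists_high hA k hk1 hk2 (W.map (emb f)) hW'd
    obtain ⟨y, hyW, rfl⟩ := Submodule.mem_map.1 hxW
    have hray := emb_rayleigh f A y
    have hle := hWb y hyW
    have hpos : (0:ℝ) < inner ℝ ((emb f) y) ((emb f) y) := inner_self_pos' hx0
    have hei := emb_inner f hf y
    rw [hei] at hpos hxhigh
    have key : kthEig A k * (inner ℝ y y : ℝ) ≤ kthEig (A.submatrix f f) i * inner ℝ y y := by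
      linarith [hle, hray, hxhigh]
    exact le_of_mul_le_mul_right key hpos
end
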